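/- arXiv:1910.13994 — 6 statements merged into one kernel-verified Lean document; each statement's English description precedes it below -/
import Mathlib

section
/- Let f be a polynomial with complex coefficients such that |f(z)| > 2 for all z on the unit circle. Then for all positive integers n and r with n > r + deg f, the polynomial h(z) = 1 + z^r·f(z) + z^n has exactly N(f) + r zeros in the open unit disk (with multiplicity) and no zeros on the unit circle. -/
open Polynomial Metric Set Complex

/-- Number of zeros of a polynomial in the open unit disk, counted with multiplicity. -/
noncomputable def diskZeros (h : Polynomial ℂ) : ℕ :=
  (h.roots.filter (fun z => ‖z‖ < 1)).card

lemma circleIntegral.integral_add' {f g : ℂ → ℂ} {c : ℂ} {R : ℝ}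
    (hf : CircleIntegrable f c R) (hg : CircleIntegrable g c R) :
    (∮ z in C(c, R), (f z + g z)) = (∮ z in C(c, R), f z) + ∮ z in C(c, R), g z := by
  simp only [circleIntegral, smul_add, intervalIntegral.integral_add hf.out hg.out]

lemma integral_inv_of_one_lt {a : ℂ} (ha : 1 < ‖a‖) :
    (∮ z in C((0:ℂ), 1), (z - a)⁻¹) = 0 := by
  apply circleIntegral_eq_zero_of_differentiable_on_off_countable zero_le_one
    Set.countable_empty
  · apply ContinuousOn.inv₀ (by fun_prop)
    intro z hz
    simp only [mem_closedBall, dist_zero_right] at hz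
    intro h
    rw [sub_eq_zero] at h
    subst h
    exact absurd ha (not_lt.2 hz)
  · intro z hz
    simp only [Set.diff_empty, mem_ball, dist_zero_right] at hz
    apply DifferentiableAt.inv (by fun_prop)
    intro h
    rw [sub_eq_zero] at h
    subst h
    exact absurd (hz.trans ha) (lt_irrefl _)

lemma count_formula : ∀ (N : ℕ) (p : Polynomial ℂ), p.natDegree = N → p ≠ 0 →
    (∀ z : ℂ, ‖z‖ = 1 → p.eval z ≠ 0) →
    (∮ z in C((0:ℂ), 1), p.derivative.eval z / p.eval z)
      = (2 * Real.pi * Complex.I) * diskZeros p := by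
  intro N
  induction N using Nat.strong_induction_on with
  | _ N ih =>
    intro p hN hp hcirc
    rcases Nat.eq_zero_or_pos N with h0 | hpos
    · -- constant polynomial
      subst h0
      have : p.derivative = 0 := by
        rw [Polynomial.eq_C_of_natDegree_eq_zero hN]; simp
      have hroots : p.roots = 0 := by
        rw [Polynomial.eq_C_of_natDegree_eq_zero hN]
        exact Polynomial.roots_C _
      have hd : diskZeros p = 0 := by simp [diskZeros, hroots]
      simp only [this, Polynomial.eval_zero, zero_div, hd, Nat.cast_zero, mul_zero]
      simp [circleIntegral]
    · -- p has a root
      have hdeg : 0 < p.degree := by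
        rw [← hN] at hpos
        exact Polynomial.natDegree_pos_iff_degree_pos.1 hpos
      obtain ⟨a, ha⟩ := Complex.exists_root hdeg
      obtain ⟨q, hq⟩ := (Polynomial.dvd_iff_isRoot.2 ha)
      have hq0 : q ≠ 0 := by rintro rfl; simp at hq; exact hp hq
      have hXa : (X - C a : Polynomial ℂ) ≠ 0 := Polynomial.X_sub_C_ne_zero a
      have hqdeg : q.natDegree = N - 1 := by
        have := Polynomial.natDegree_mul hXa hq0
        rw [← hq, hN, Polynomial.natDegree_X_sub_C] at this
        omega
      have ha1 : ‖a‖ ≠ 1 := by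
        intro h1
        exact hcirc a h1 ha
      have hqcirc : ∀ z : ℂ, ‖z‖ = 1 → q.eval z ≠ 0 := by
        intro z hz hz0
        apply hcirc z hz
        rw [hq]; simp [hz0]
      have hza : ∀ z : ℂ, ‖z‖ = 1 → z - a ≠ 0 := by
        intro z hz h
        rw [sub_eq_zero] at h
        exact ha1 (h ▸ hz)
      -- derivative formula
      have hder : p.derivative = q + (X - C a) * q.derivative := by
        rw [hq, Polynomial.derivative_mul]; simp
      -- pointwise equality on the sphere
      have hEq : Set.EqOn (fun z => p.derivative.eval z / p.eval z)
          (fun z => (z - a)⁻¹ + q.derivative.eval z / q.eval z) (sphere (0:ℂ) 1) := by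
        intro z hz
        simp only [mem_sphere_iff_norm, sub_zero] at hz
        have h1 := hza z hz
        have h2 := hqcirc z hz
        rw [hder, hq]
        simp only [Polynomial.eval_add, Polynomial.eval_mul, Polynomial.eval_sub,
          Polynomial.eval_X, Polynomial.eval_C]
        field_simp
      rw [circleIntegral.integral_congr zero_le_one hEq]
      have hi1 : CircleIntegrable (fun z => (z - a)⁻¹) (0:ℂ) 1 := by
        apply ContinuousOn.circleIntegrable zero_le_one
        apply ContinuousOn.inv₀ (by fun_prop)
        intro z hz
        simp only [mem_sphere_iff_norm, sub_zero] at hz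
        exact hza z hz
      have hi2 : CircleIntegrable (fun z => q.derivative.eval z / q.eval z) (0:ℂ) 1 := by
        apply ContinuousOn.circleIntegrable zero_le_one
        apply ContinuousOn.div (by fun_prop) (by fun_prop)
        intro z hz
        simp only [mem_sphere_iff_norm, sub_zero] at hz
        exact hqcirc z hz
      rw [circleIntegral.integral_add' hi1 hi2]
      have hrec := ih (N - 1) (by omega) q hqdeg hq0 hqcirc
      have hdz : diskZeros p = diskZeros q + (if ‖a‖ < 1 then 1 else 0) := by
        unfold diskZeros
        rw [hq, Polynomial.roots_mul (hq ▸ hp), Polynomial.roots_X_sub_C,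
          Multiset.filter_add, Multiset.card_add]
        simp only [Multiset.filter_singleton]
        split <;> simp [add_comm]
      rcases lt_or_gt_of_ne ha1 with hlt | hgt
      · rw [circleIntegral.integral_sub_inv_of_mem_ball (by simpa [mem_ball, dist_eq] using hlt)]
        rw [hrec, hdz]
        simp only [if_pos hlt]
        push_cast
        ring
      · rw [integral_inv_of_one_lt hgt, hrec, hdz]
        simp only [if_neg (not_lt.2 hgt.le)]
        push_cast
        ring

lemma rouche (g u : Polynomial ℂ)
    (hlt : ∀ z : ℂ, ‖z‖ = 1 → ‖u.eval z‖ < ‖g.eval z‖) :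
    diskZeros (g + u) = diskZeros g := by
  set proj : ℝ → ℝ := fun t => max 0 (min t 1) with hproj
  have hproj_cont : Continuous proj := by fun_prop
  have hproj_mem : ∀ t, 0 ≤ proj t ∧ proj t ≤ 1 := by
    intro t
    constructor
    · exact le_max_left _ _
    · exact max_le (by norm_num) (min_le_right _ _)
  have hproj0 : proj 0 = 0 := by simp [hproj]
  have hproj1 : proj 1 = 1 := by norm_num [hproj]
  set q : ℝ → Polynomial ℂ := fun t => g + C ((proj t : ℝ) : ℂ) * u with hqdef
  -- nonvanishing of denominator
  have hne : ∀ (t : ℝ) (z : ℂ), ‖z‖ = 1 →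
      g.eval z + ((proj t : ℝ) : ℂ) * u.eval z ≠ 0 := by
    intro t z hz h0
    have h1 : ‖((proj t : ℝ) : ℂ) * u.eval z‖ ≤ ‖u.eval z‖ := by
      rw [norm_mul]
      have : ‖((proj t : ℝ) : ℂ)‖ ≤ 1 := by
        rw [Complex.norm_real, Real.norm_eq_abs, _root_.abs_of_nonneg (hproj_mem t).1]
        exact (hproj_mem t).2
      nlinarith [norm_nonneg (u.eval z)]
    have h2 : g.eval z = -(((proj t : ℝ) : ℂ) * u.eval z) := by linear_combination h0
    have h3 : ‖g.eval z‖ ≤ ‖u.eval z‖ := by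
      rw [h2]; simpa using h1
    exact absurd (hlt z hz) (not_lt.2 h3)
  have hqeval : ∀ (t : ℝ) (z : ℂ), (q t).eval z = g.eval z + ((proj t : ℝ) : ℂ) * u.eval z := by
    intro t z; simp [hqdef]
  have hqne : ∀ (t : ℝ) (z : ℂ), ‖z‖ = 1 → (q t).eval z ≠ 0 := by
    intro t z hz; rw [hqeval]; exact hne t z hz
  have hq0 : ∀ t, q t ≠ 0 := by
    intro t h0
    have := hqne t 1 (by simp)
    rw [h0] at this
    simp at this
  have hqder : ∀ (t : ℝ) (z : ℂ), (q t).derivative.eval z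
      = g.derivative.eval z + ((proj t : ℝ) : ℂ) * u.derivative.eval z := by
    intro t z
    simp [hqdef, Polynomial.derivative_add, Polynomial.derivative_C_mul]
  -- the integral as a function of t
  set F : ℝ → ℂ := fun t => ∮ z in C((0:ℂ), 1), (q t).derivative.eval z / (q t).eval z with hF
  have hFval : ∀ t, F t = (2 * Real.pi * Complex.I) * diskZeros (q t) := by
    intro t
    exact count_formula _ (q t) rfl (hq0 t) (hqne t)
  have hFcont : Continuous F := by
    have : F = fun t => ∫ θ in (0:ℝ)..(2 * Real.pi),
        (deriv (circleMap 0 1) θ) •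
          ((g.derivative.eval (circleMap 0 1 θ) + ((proj t : ℝ) : ℂ) * u.derivative.eval (circleMap 0 1 θ)) /
           (g.eval (circleMap 0 1 θ) + ((proj t : ℝ) : ℂ) * u.eval (circleMap 0 1 θ))) := by
      funext t
      rw [hF]
      simp only [circleIntegral]
      congr 1
      funext θ
      rw [hqder, hqeval]
    rw [this]
    apply intervalIntegral.continuous_parametric_intervalIntegral_of_continuous'
    have hcm : Continuous (fun p : ℝ × ℝ => circleMap 0 1 p.2) :=
      (continuous_circleMap 0 1).comp continuous_snd
    have habs : ∀ θ : ℝ, ‖circleMap 0 1 θ‖ = 1 := by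
      intro θ; simp [circleMap]
    simp only [Function.uncurry_def]
    apply Continuous.fun_smul
    · simp only [deriv_circleMap]
      fun_prop
    · apply Continuous.div
      · fun_prop
      · fun_prop
      · intro p
        exact hne p.1 (circleMap 0 1 p.2) (habs p.2)
  -- deduce constancy of t ↦ diskZeros (q t)
  set G : ℝ → ℝ := fun t => (F t / (2 * Real.pi * Complex.I)).re with hG
  have hGval : ∀ t, G t = (diskZeros (q t) : ℝ) := by
    intro t
    rw [hG]
    simp only [hFval t]
    have hne2 : (2 * (Real.pi : ℂ) * Complex.I) ≠ 0 :=
      mul_ne_zero (mul_ne_zero two_ne_zero (Complex.ofReal_ne_zero.2 Real.pi_ne_zero))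
        Complex.I_ne_zero
    rw [mul_comm, mul_div_assoc, div_self hne2, mul_one]
    simp
  have hGcont : Continuous G := by
    apply Complex.continuous_re.comp
    exact hFcont.div_const _
  have key : diskZeros (q 0) = diskZeros (q 1) := by
    by_contra hne01
    set m : ℕ := min (diskZeros (q 0)) (diskZeros (q 1)) with hm
    set M : ℕ := max (diskZeros (q 0)) (diskZeros (q 1)) with hM
    have hmM : m + 1 ≤ M := by omega
    have hv : ((m : ℝ) + 1/2) ∈ Set.uIcc (G 0) (G 1) := by
      rw [Set.mem_uIcc]
      rw [hGval 0, hGval 1]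
      rcases le_or_gt (diskZeros (q 0)) (diskZeros (q 1)) with h | h
      · left
        constructor
        · have : m = diskZeros (q 0) := by omega
          rw [this]; linarith
        · have : M = diskZeros (q 1) := by omega
          have h2 : (m : ℝ) + 1 ≤ M := by exact_mod_cast hmM
          rw [this] at h2; linarith
      · right
        constructor
        · have : m = diskZeros (q 1) := by omega
          rw [this]; linarith
        · have : M = diskZeros (q 0) := by omega
          have h2 : (m : ℝ) + 1 ≤ M := by exact_mod_cast hmM
          rw [this] at h2; linarith
    obtain ⟨c, _, hc⟩ := intermediate_value_uIcc (hGcont.continuousOn (s := Set.uIcc 0 1)) hv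
    rw [hGval c] at hc
    have : (2 * diskZeros (q c) : ℝ) = 2 * m + 1 := by linarith [hc]
    have : (2 * diskZeros (q c) : ℕ) = 2 * m + 1 := by exact_mod_cast this
    omega
  have h0 : q 0 = g := by simp [hqdef, hproj0]
  have h1 : q 1 = g + u := by simp [hqdef, hproj1]
  rw [← h1, ← key, h0]

theorem stmt_1 (f : Polynomial ℂ)
    (hf : ∀ z : ℂ, ‖z‖ = 1 → 2 < ‖f.eval z‖)
    (n r : ℕ) (hn : 0 < n) (hr : 0 < r) (hnr : r + f.natDegree < n) :
    diskZeros (1 + X ^ r * f + X ^ n) = diskZeros f + r ∧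
      ∀ z : ℂ, ‖z‖ = 1 → (1 + X ^ r * f + X ^ n).eval z ≠ 0 := by
  have hf0 : f ≠ 0 := by
    intro h0
    have := hf 1 (by simp)
    rw [h0] at this
    simp at this
    linarith
  have habs : ∀ z : ℂ, ‖z‖ = 1 →
      ‖(1 + X ^ n : Polynomial ℂ).eval z‖ < ‖(X ^ r * f).eval z‖ := by
    intro z hz
    have h1 : ‖(1 + X ^ n : Polynomial ℂ).eval z‖ ≤ 2 := by
      simp only [Polynomial.eval_add, Polynomial.eval_one, Polynomial.eval_pow,
        Polynomial.eval_X]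
      calc ‖1 + z ^ n‖ ≤ ‖(1 : ℂ)‖ + ‖z ^ n‖ :=
            norm_add_le _ _
        _ = 2 := by rw [norm_one, norm_pow, hz, one_pow]; norm_num
    have h2 : ‖(X ^ r * f).eval z‖ = ‖f.eval z‖ := by
      simp only [Polynomial.eval_mul, Polynomial.eval_pow, Polynomial.eval_X, norm_mul,
        norm_pow, hz, one_pow, one_mul]
    rw [h2]
    exact lt_of_le_of_lt h1 (hf z hz)
  have heq : (1 + X ^ r * f + X ^ n : Polynomial ℂ) = X ^ r * f + (1 + X ^ n) := by ring
  constructor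
  · rw [heq, rouche _ _ habs]
    unfold diskZeros
    rw [Polynomial.roots_mul (mul_ne_zero (pow_ne_zero r Polynomial.X_ne_zero) hf0),
      Polynomial.roots_pow, Polynomial.roots_X, Multiset.filter_add, Multiset.card_add]
    have : (r • ({0} : Multiset ℂ)).filter (fun z => ‖z‖ < 1)
        = r • ({0} : Multiset ℂ) := by
      rw [Multiset.filter_eq_self]
      intro a ha
      rw [Multiset.mem_nsmul] at ha
      obtain ⟨-, ha⟩ := ha
      simp at ha
      simp [ha]
    rw [this]
    simp [add_comm]
  · intro z hz h0
    have := habs z hz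
    have h2 : ((X ^ r * f : Polynomial ℂ)).eval z = -((1 + X ^ n : Polynomial ℂ).eval z) := by
      have : (1 + X ^ r * f + X ^ n : Polynomial ℂ).eval z = 0 := h0
      simp only [Polynomial.eval_add, Polynomial.eval_one, Polynomial.eval_mul,
        Polynomial.eval_pow, Polynomial.eval_X] at this ⊢
      linear_combination this
    rw [h2, norm_neg] at this
    exact absurd this (lt_irrefl _)
end

section
/- Let f(z) = 1 − z + z² − 2z^{2+3m}(1+z) for a positive integer m, and g(z) = 1 + z + z². Then |f(z)| ≥ |g(z)| for all z on the unit circle, with equality only at z = 1 and z = e^{±2πi/3}. -/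
open Polynomial

private lemma cos_mul_cos_le_one' (x y : ℝ) : Real.cos x * Real.cos y ≤ 1 := by
  nlinarith [Real.neg_one_le_cos x, Real.cos_le_one x, Real.neg_one_le_cos y, Real.cos_le_one y]

private lemma sin_eq_zero_of_cos_mul_cos_eq_one' (x y : ℝ)
    (h : Real.cos x * Real.cos y = 1) : Real.sin x = 0 := by
  have hsq : Real.cos x ^ 2 * Real.cos y ^ 2 = 1 := by
    linear_combination (Real.cos x * Real.cos y + 1) * h
  have h1 : Real.cos y ^ 2 ≤ 1 := Real.cos_sq_le_one y
  have h2 := Real.sin_sq_add_cos_sq x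
  have h3 : Real.sin x ^ 2 = 0 := by nlinarith [sq_nonneg (Real.sin x), sq_nonneg (Real.cos x)]
  exact pow_eq_zero_iff two_ne_zero |>.mp h3

private lemma pair_exp (θ : ℝ) :
    Complex.exp ((θ : ℂ) * Complex.I) + (Complex.exp ((θ : ℂ) * Complex.I))⁻¹
      = ((2 * Real.cos θ : ℝ) : ℂ) := by
  rw [← Complex.exp_neg, show -((θ : ℂ) * Complex.I) = ((-θ : ℝ) : ℂ) * Complex.I by
    push_cast; ring, Complex.exp_mul_I, Complex.exp_mul_I]
  push_cast
  simp [Complex.cos_neg, Complex.sin_neg]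
  ring

theorem stmt_7 (m : ℕ) (hm : 1 ≤ m) :
    ∀ z : ℂ, ‖z‖ = 1 →
      ‖(1 + X + X ^ 2 : Polynomial ℂ).eval z‖ ≤
        ‖(1 - X + X ^ 2 - C 2 * X ^ (2 + 3 * m) * (1 + X) : Polynomial ℂ).eval z‖ ∧
      (‖(1 - X + X ^ 2 - C 2 * X ^ (2 + 3 * m) * (1 + X) : Polynomial ℂ).eval z‖ =
          ‖(1 + X + X ^ 2 : Polynomial ℂ).eval z‖ →
        z = 1 ∨ z = Complex.exp (2 * Real.pi * Complex.I / 3) ∨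
          z = Complex.exp (-(2 * Real.pi * Complex.I / 3))) := by
  intro z hz1
  have ht : Complex.arg z ∈ Set.Ioc (-Real.pi) Real.pi := Complex.arg_mem_Ioc z
  set t : ℝ := Complex.arg z with htdef
  have hz : z = Complex.exp ((t : ℂ) * Complex.I) := by
    conv_lhs => rw [← Complex.norm_mul_exp_arg_mul_I z]
    rw [hz1, Complex.ofReal_one, one_mul]
  set H : ℂ := Complex.exp (((t / 2 : ℝ) : ℂ) * Complex.I) with hHdef
  set A : ℂ := Complex.exp (((3 * m * t : ℝ) : ℂ) * Complex.I) with hAdef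
  have hH : H ≠ 0 := Complex.exp_ne_zero _
  have hA : A ≠ 0 := Complex.exp_ne_zero _
  have hzH : z = H ^ 2 := by
    rw [hz, hHdef, ← Complex.exp_nat_mul]
    congr 1; push_cast; ring
  have hz23 : z ^ (2 + 3 * m) = H ^ 4 * A := by
    rw [hz, ← Complex.exp_nat_mul, hHdef, hAdef, ← Complex.exp_nat_mul, ← Complex.exp_add]
    congr 1; push_cast; ring
  have hconjH : (starRingEnd ℂ) H = H⁻¹ := by
    rw [hHdef, ← Complex.exp_conj, ← Complex.exp_neg]
    congr 1
    rw [map_mul, Complex.conj_ofReal, Complex.conj_I]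
    ring
  have hconjA : (starRingEnd ℂ) A = A⁻¹ := by
    rw [hAdef, ← Complex.exp_conj, ← Complex.exp_neg]
    congr 1
    rw [map_mul, Complex.conj_ofReal, Complex.conj_I]
    ring
  set F : ℂ := (1 - X + X ^ 2 - C 2 * X ^ (2 + 3 * m) * (1 + X) : Polynomial ℂ).eval z with hFdef
  set G : ℂ := (1 + X + X ^ 2 : Polynomial ℂ).eval z with hGdef
  have hF : F = 1 - H ^ 2 + H ^ 4 - 2 * (H ^ 4 * A) * (1 + H ^ 2) := by
    rw [hFdef]
    simp only [eval_add, eval_sub, eval_mul, eval_pow, eval_X, eval_one, eval_C]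
    rw [hz23, hzH]; ring
  have hG : G = 1 + H ^ 2 + H ^ 4 := by
    rw [hGdef]
    simp only [eval_add, eval_pow, eval_X, eval_one]
    rw [hzH]; ring
  have hH3ne : H ^ 3 ≠ 0 := pow_ne_zero _ hH
  have hH3Ane : H ^ 3 * A ≠ 0 := mul_ne_zero hH3ne hA
  have hmain : F * (starRingEnd ℂ) F - G * (starRingEnd ℂ) G
      = 8 - 2 * (H ^ 3 + (H ^ 3)⁻¹) * (H ^ 3 * A + (H ^ 3 * A)⁻¹) := by
    rw [hF, hG]
    have hu : H * H⁻¹ = 1 := mul_inv_cancel₀ hH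
    have hv : A * A⁻¹ = 1 := mul_inv_cancel₀ hA
    simp only [map_add, map_sub, map_mul, map_pow, map_one, map_ofNat, hconjH, hconjA,
      mul_inv, ← inv_pow]
    linear_combination ((8 * A * A⁻¹) + ((-2 : ℂ) * H⁻¹ ^ 2) + (4 * H⁻¹ ^ 2 * A * A⁻¹) + (2 * H⁻¹ ^ 4 * A⁻¹) + (8 * H * H⁻¹ * A * A⁻¹) + ((-2 : ℂ) * H * H⁻¹ ^ 3) + (4 * H * H⁻¹ ^ 3 * A * A⁻¹) + (2 * H * H⁻¹ ^ 5 * A⁻¹) + ((-2 : ℂ) * H ^ 2) + (4 * H ^ 2 * A * A⁻¹) + (8 * H ^ 2 * H⁻¹ ^ 2 * A * A⁻¹) + ((-2 : ℂ) * H ^ 2 * H⁻¹ ^ 4 * A⁻¹) + (4 * H ^ 2 * H⁻¹ ^ 4 * A * A⁻¹) + ((-2 : ℂ) * H ^ 3 * H⁻¹) + (4 * H ^ 3 * H⁻¹ * A * A⁻¹) + ((-2 : ℂ) * H ^ 3 * H⁻¹ ^ 3 * A⁻¹) + ((-2 : ℂ) * H ^ 3 * H⁻¹ ^ 3 * A)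 + (8 * H ^ 3 * H⁻¹ ^ 3 * A * A⁻¹) + ((-2 : ℂ) * H ^ 3 * H⁻¹ ^ 5 * A⁻¹) + (4 * H ^ 3 * H⁻¹ ^ 5 * A * A⁻¹) + (2 * H ^ 4 * A) + ((-2 : ℂ) * H ^ 4 * H⁻¹ ^ 2 * A) + (4 * H ^ 4 * H⁻¹ ^ 2 * A * A⁻¹) + (4 * H ^ 4 * H⁻¹ ^ 4 * A * A⁻¹) + (2 * H ^ 5 * H⁻¹ * A) + ((-2 : ℂ) * H ^ 5 * H⁻¹ ^ 3 * A) + (4 * H ^ 5 * H⁻¹ ^ 3 * A * A⁻¹) + (4 * H ^ 5 * H⁻¹ ^ 5 * A * A⁻¹)) * hu + ((8 : ℂ) + (4 * H⁻¹ ^ 2) + (4 * H ^ 2)) * hv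
  have hH3 : H ^ 3 = Complex.exp (((3 * (t / 2) : ℝ) : ℂ) * Complex.I) := by
    rw [hHdef, ← Complex.exp_nat_mul]
    congr 1; push_cast; ring
  have hH3A : H ^ 3 * A = Complex.exp (((3 * (t / 2) + 3 * m * t : ℝ) : ℂ) * Complex.I) := by
    rw [hH3, hAdef, ← Complex.exp_add]
    congr 1; push_cast; ring
  have hH3sum : H ^ 3 + (H ^ 3)⁻¹ = ((2 * Real.cos (3 * (t / 2)) : ℝ) : ℂ) := by
    rw [hH3]; exact pair_exp _
  have hH3Asum : H ^ 3 * A + (H ^ 3 * A)⁻¹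
      = ((2 * Real.cos (3 * (t / 2) + 3 * m * t) : ℝ) : ℂ) := by
    rw [hH3A]; exact pair_exp _
  have hcast : ((Complex.normSq F : ℝ) : ℂ) - ((Complex.normSq G : ℝ) : ℂ)
      = 8 - 2 * ((2 * Real.cos (3 * (t / 2)) : ℝ) : ℂ)
          * ((2 * Real.cos (3 * (t / 2) + 3 * m * t) : ℝ) : ℂ) := by
    rw [← Complex.mul_conj, ← Complex.mul_conj, hmain, hH3sum, hH3Asum]
  have hreal : Complex.normSq F - Complex.normSq G
      = 8 - 8 * (Real.cos (3 * (t / 2)) * Real.cos (3 * (t / 2) + 3 * m * t)) := by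
    have h := hcast
    have h2 : ((Complex.normSq F - Complex.normSq G : ℝ) : ℂ)
        = ((8 - 8 * (Real.cos (3 * (t / 2)) * Real.cos (3 * (t / 2) + 3 * m * t)) : ℝ) : ℂ) := by
      push_cast
      push_cast at h
      linear_combination h
    exact_mod_cast h2
  have hcc := cos_mul_cos_le_one' (3 * (t / 2)) (3 * (t / 2) + 3 * m * t)
  have hle : Complex.normSq G ≤ Complex.normSq F := by linarith
  constructor
  · rw [Complex.norm_def, Complex.norm_def]
    exact Real.sqrt_le_sqrt hle
  · intro heq
    have hnsq : Complex.normSq F = Complex.normSq G := by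
      have h := congrArg (· ^ 2) heq
      simpa [Complex.sq_norm] using h
    have hp : Real.cos (3 * (t / 2)) * Real.cos (3 * (t / 2) + 3 * m * t) = 1 := by linarith
    have hsin : Real.sin (3 * (t / 2)) = 0 :=
      sin_eq_zero_of_cos_mul_cos_eq_one' _ _ hp
    obtain ⟨k, hk⟩ := Real.sin_eq_zero_iff.mp hsin
    have hpi := Real.pi_pos
    have hkt : t = 2 * (k : ℝ) * Real.pi / 3 := by linear_combination (-2 / 3 : ℝ) * hk
    have h1 : -Real.pi < t := ht.1
    have h2 : t ≤ Real.pi := ht.2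
    have hk1 : k ≤ 1 := by
      by_contra hc
      push_neg at hc
      have : (2 : ℝ) ≤ (k : ℝ) := by exact_mod_cast hc
      nlinarith
    have hk2 : -1 ≤ k := by
      by_contra hc
      push_neg at hc
      have hk' : k ≤ -2 := by omega
      have : (k : ℝ) ≤ -2 := by exact_mod_cast hk'
      nlinarith
    interval_cases k
    · right; right
      rw [hz, hkt]
      congr 1
      push_cast
      ring
    · left
      rw [hz, hkt]
      push_cast
      norm_num [Complex.exp_zero]
    · right; left
      rw [hz, hkt]
      congr 1
      push_cast
      ring
end

section
/- Suppose Newman polynomials f, g (polynomials with coefficients in {0,1} and constant term and leading coefficient 1) satisfy: f has no zeros on the unit circle, g has no zeros on the unit circle, N(f) = a, deg f = c, N(g) = b, deg g = d. For positive integers l, m with l > d·m, the polynomial h(z) = f(z^l)·g(z^m) is again a Newman polynomial, has no zeros on the unit circle, satisfies N(h) = a·l + b·m, and deg h = c·l + d·m. -/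
open Polynomial

/-- A Newman polynomial: coefficients in {0,1}, constant term 1, leading coefficient 1. -/
def IsNewman (h : Polynomial ℂ) : Prop :=
  (∀ j, h.coeff j = 0 ∨ h.coeff j = 1) ∧ h.coeff 0 = 1 ∧ h.leadingCoeff = 1

lemma my_filter_bind {α β : Type*} (s : Multiset α) (t : α → Multiset β) (p : β → Prop)
    [DecidablePred p] :
    (s.bind t).filter p = s.bind fun a => (t a).filter p := by
  induction s using Multiset.induction with
  | empty => simp
  | cons a s ih => simp [Multiset.filter_add, ih]

lemma my_sum_ite_card {α : Type*} (s : Multiset α) (p : α → Prop) [DecidablePred p] (n : ℕ) :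
    (s.map fun r => if p r then n else 0).sum = n * (s.filter p).card := by
  induction s using Multiset.induction with
  | empty => simp
  | cons a s ih =>
    by_cases h : p a
    · simp [h, ih, Nat.mul_add]
      omega
    · simp [h, ih]

lemma my_diskZeros_expand (f : Polynomial ℂ) (hf : f ≠ 0) (l : ℕ) (hl : 0 < l) :
    diskZeros (expand ℂ l f) = l * diskZeros f := by
  have hsplit : Splits f := IsAlgClosed.splits f
  have hfac := hsplit.eq_prod_roots
  have hE : expand ℂ l f = C f.leadingCoeff * (f.roots.map fun r => X ^ l - C r).prod := by
    conv_lhs => rw [hfac]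
    rw [map_mul, expand_C, map_multiset_prod, Multiset.map_map]
    congr 2
    apply Multiset.map_congr rfl
    intro r _
    simp [map_sub, expand_X, expand_C]
  have hr : (expand ℂ l f).roots = f.roots.bind fun r => (X ^ l - C r).roots := by
    rw [hE, roots_C_mul _ (leadingCoeff_ne_zero.mpr hf), roots_multiset_prod, Multiset.bind_map]
    intro h0
    obtain ⟨r, _, hr0⟩ := Multiset.mem_map.mp h0
    exact X_pow_sub_C_ne_zero hl r hr0
  have key : ∀ r ∈ f.roots,
      (((X ^ l - C r).roots.filter fun z => ‖z‖ < 1)).card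
        = if ‖r‖ < 1 then l else 0 := by
    intro r _
    have hcard : ((X ^ l - C r).roots).card = l := by
      rw [splits_iff_card_roots.mp (IsAlgClosed.splits _), natDegree_X_pow_sub_C]
    have habs : ∀ z ∈ (X ^ l - C r).roots, ‖z‖ ^ l = ‖r‖ := by
      intro z hz
      have hz' : z ^ l = r := by
        have h2 := (mem_roots (X_pow_sub_C_ne_zero hl r)).mp hz
        simpa [IsRoot, sub_eq_zero] using h2
      rw [← hz', norm_pow]
    by_cases hlt : ‖r‖ < 1
    · rw [if_pos hlt]
      rw [Multiset.filter_eq_self.mpr ?_]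
      · exact hcard
      intro z hz
      by_contra hge
      push_neg at hge
      have h1 : (1 : ℝ) ≤ ‖z‖ ^ l := one_le_pow₀ hge
      rw [habs z hz] at h1
      linarith
    · rw [if_neg hlt]
      rw [Multiset.card_eq_zero, Multiset.filter_eq_nil]
      intro z hz hzlt
      apply hlt
      rw [← habs z hz]
      exact pow_lt_one₀ (norm_nonneg z) hzlt hl.ne'
  unfold diskZeros
  rw [hr, my_filter_bind, Multiset.card_bind, Multiset.map_congr rfl (by
    intro r hrr
    exact key r hrr)]
  exact my_sum_ite_card _ _ l

lemma my_unique_pair {l dm i1 j1 i2 j2 : ℕ} (hl : dm < l) (h1 : l ∣ i1) (h2 : l ∣ i2)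
    (hj1 : j1 ≤ dm) (hj2 : j2 ≤ dm) (hsum : i1 + j1 = i2 + j2) : i1 = i2 ∧ j1 = j2 := by
  obtain ⟨u, rfl⟩ := h1
  obtain ⟨v, rfl⟩ := h2
  rcases lt_trichotomy u v with h | h | h
  · have : l * u + l ≤ l * v := by
      calc l * u + l = l * (u + 1) := by ring
      _ ≤ l * v := Nat.mul_le_mul_left l h
    omega
  · subst h; omega
  · have : l * v + l ≤ l * u := by
      calc l * v + l = l * (v + 1) := by ring
      _ ≤ l * u := Nat.mul_le_mul_left l h
    omega

lemma my_sum_binary {ι : Type*} (s : Finset ι) (F : ι → ℂ)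
    (h01 : ∀ x ∈ s, F x = 0 ∨ F x = 1)
    (huniq : ∀ x ∈ s, ∀ y ∈ s, F x ≠ 0 → F y ≠ 0 → x = y) :
    (∑ x ∈ s, F x) = 0 ∨ (∑ x ∈ s, F x) = 1 := by
  by_cases h : ∃ x ∈ s, F x ≠ 0
  · obtain ⟨x, hx, hxne⟩ := h
    right
    rw [Finset.sum_eq_single_of_mem x hx
      (fun y hy hne => by_contra fun hFy => hne (huniq y hy x hx hFy hxne))]
    rcases h01 x hx with h | h
    · exact absurd h hxne
    · exact h
  · left
    push_neg at h
    exact Finset.sum_eq_zero h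

theorem stmt_11 (f g : Polynomial ℂ) (a b c d : ℕ)
    (hf : IsNewman f) (hg : IsNewman g)
    (hfU : ∀ z : ℂ, ‖z‖ = 1 → f.eval z ≠ 0)
    (hgU : ∀ z : ℂ, ‖z‖ = 1 → g.eval z ≠ 0)
    (hNf : diskZeros f = a) (hdf : f.natDegree = c)
    (hNg : diskZeros g = b) (hdg : g.natDegree = d)
    (l m : ℕ) (hl : 0 < l) (hm : 0 < m) (hlm : d * m < l) :
    IsNewman (f.comp (X ^ l) * g.comp (X ^ m)) ∧
      (∀ z : ℂ, ‖z‖ = 1 → (f.comp (X ^ l) * g.comp (X ^ m)).eval z ≠ 0) ∧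
      diskZeros (f.comp (X ^ l) * g.comp (X ^ m)) = a * l + b * m ∧
      (f.comp (X ^ l) * g.comp (X ^ m)).natDegree = c * l + d * m := by
  have hf0 : f ≠ 0 := fun h => by simp [h] at hf; exact one_ne_zero hf.2.1.symm
  have hg0 : g ≠ 0 := fun h => by simp [h] at hg; exact one_ne_zero hg.2.1.symm
  have hPe : f.comp (X ^ l) = expand ℂ l f := rfl
  have hQe : g.comp (X ^ m) = expand ℂ m g := rfl
  set P := f.comp (X ^ l) with hP
  set Q := g.comp (X ^ m) with hQ
  have hP0 : P ≠ 0 := by rw [hPe]; exact (expand_ne_zero hl).mpr hf0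
  have hQ0 : Q ≠ 0 := by rw [hQe]; exact (expand_ne_zero hm).mpr hg0
  have hPQ0 : P * Q ≠ 0 := mul_ne_zero hP0 hQ0
  have hQdeg : Q.natDegree = d * m := by rw [hQe, natDegree_expand, hdg]
  have hPcoeff : ∀ n, P.coeff n = if l ∣ n then f.coeff (n / l) else 0 := by
    intro n; rw [hPe]; exact coeff_expand hl f n
  have hQcoeff : ∀ n, Q.coeff n = if m ∣ n then g.coeff (n / m) else 0 := by
    intro n; rw [hQe]; exact coeff_expand hm g n
  refine ⟨⟨?_, ?_, ?_⟩, ?_, ?_, ?_⟩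
  · -- coefficients in {0,1}
    intro k
    rw [coeff_mul]
    apply my_sum_binary
    · intro x _
      rw [hPcoeff, hQcoeff]
      split_ifs with h1 h2 h2
      · rcases hf.1 (x.1 / l) with h | h
        · left; rw [h, zero_mul]
        · rcases hg.1 (x.2 / m) with h' | h'
          · left; rw [h', mul_zero]
          · right; rw [h, h', mul_one]
      all_goals left; simp
    · intro x hx y hy hxne hyne
      rw [Finset.HasAntidiagonal.mem_antidiagonal] at hx hy
      have hxl : l ∣ x.1 := by
        by_contra h
        rw [hPcoeff, if_neg h, zero_mul] at hxne
        exact hxne rfl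
      have hyl : l ∣ y.1 := by
        by_contra h
        rw [hPcoeff, if_neg h, zero_mul] at hyne
        exact hyne rfl
      have hxq : Q.coeff x.2 ≠ 0 := fun h => hxne (by rw [h, mul_zero])
      have hyq : Q.coeff y.2 ≠ 0 := fun h => hyne (by rw [h, mul_zero])
      have hx2 : x.2 ≤ d * m := hQdeg ▸ le_natDegree_of_ne_zero hxq
      have hy2 : y.2 ≤ d * m := hQdeg ▸ le_natDegree_of_ne_zero hyq
      have := my_unique_pair hlm hxl hyl hx2 hy2 (by omega)
      exact Prod.ext this.1 this.2
  · -- constant coefficient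
    rw [mul_coeff_zero, hPcoeff, hQcoeff, if_pos (dvd_zero l), if_pos (dvd_zero m)]
    simp [hf.2.1, hg.2.1]
  · -- leading coefficient
    rw [leadingCoeff_mul, hPe, hQe, leadingCoeff_expand hl, leadingCoeff_expand hm,
      hf.2.2, hg.2.2, mul_one]
  · -- no zeros on unit circle
    intro z hz
    rw [eval_mul, eval_comp, eval_comp, eval_pow, eval_X]
    apply mul_ne_zero
    · exact hfU _ (by simp [hz])
    · exact hgU _ (by simp [hz])
  · -- disk zeros count
    have : diskZeros (P * Q) = diskZeros P + diskZeros Q := by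
      unfold diskZeros
      rw [roots_mul hPQ0, Multiset.filter_add, Multiset.card_add]
    rw [this, hPe, hQe, my_diskZeros_expand f hf0 l hl, my_diskZeros_expand g hg0 m hm,
      hNf, hNg, Nat.mul_comm l a, Nat.mul_comm m b]
  · -- degree
    rw [natDegree_mul hP0 hQ0, hPe, hQe, natDegree_expand, natDegree_expand, hdf, hdg]
end

section
/- The Newman polynomial f(z) = 1 + z³ + z⁷ + z⁸ + z⁹ satisfies: f has exactly 5 zeros in the open unit disk, f(−1) = −1, and |f(z)| > 1 for every z on the unit circle with z ≠ −1. -/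
open Polynomial

section Aux

open Polynomial Complex Metric Real

noncomputable section




def fe (z : ℂ) : ℂ := 1 + z^3 + z^7 + z^8 + z^9

def Qc (u : ℂ) : ℂ := 184 - 5280*u + 59136*u^2 - 329472*u^3 + 1025024*u^4
  - 1863680*u^5 + 1966080*u^6 - 1114112*u^7 + 262144*u^8

def Qr (x : ℝ) : ℝ := 184 - 5280*x + 59136*x^2 - 329472*x^3 + 1025024*x^4
  - 1863680*x^5 + 1966080*x^6 - 1114112*x^7 + 262144*x^8

lemma Qr_ge {x : ℝ} (h0 : 0 ≤ x) (h1 : x ≤ 1) : 1/5 ≤ Qr x := by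
  have p2 : x^2 ≤ 1 := pow_le_one₀ h0 h1
  have p3 : x^3 ≤ 1 := pow_le_one₀ h0 h1
  have p4 : x^4 ≤ 1 := pow_le_one₀ h0 h1
  have p5 : x^5 ≤ 1 := pow_le_one₀ h0 h1
  have p6 : x^6 ≤ 1 := pow_le_one₀ h0 h1
  have p7 : x^7 ≤ 1 := pow_le_one₀ h0 h1
  have p8 : x^8 ≤ 1 := pow_le_one₀ h0 h1
  have n2 : (0:ℝ) ≤ x^2 := pow_nonneg h0 2
  have n3 : (0:ℝ) ≤ x^3 := pow_nonneg h0 3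
  have n4 : (0:ℝ) ≤ x^4 := pow_nonneg h0 4
  have n5 : (0:ℝ) ≤ x^5 := pow_nonneg h0 5
  have n6 : (0:ℝ) ≤ x^6 := pow_nonneg h0 6
  have n7 : (0:ℝ) ≤ x^7 := pow_nonneg h0 7
  have n8 : (0:ℝ) ≤ x^8 := pow_nonneg h0 8
  have key : Qr x = (14211977/1048576 - 103296711/524288*x + 802203633/1048576*x^2
      - 1142116231/1048576*x^3 + 134349697/262144*x^4)^2
      + (x*(1-x))*(8171931/1048576 - 12088353/524288*x + 5242771/131072*x^2
      - 23813473/1048576*x^3)^2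
      + (329849262255/1099511627776 + 72704547/1099511627776*x - 353786097/1099511627776*x^2
      + 342662765/549755813888*x^3 - 282051587/1099511627776*x^4 - 202771551/274877906944*x^5
      + 1315518139/1099511627776*x^6 - 922499513/1099511627776*x^7
      + 304164529/1099511627776*x^8) := by
    rw [Qr]; ring
  rw [key]
  have s1 : (0:ℝ) ≤ (14211977/1048576 - 103296711/524288*x + 802203633/1048576*x^2
      - 1142116231/1048576*x^3 + 134349697/262144*x^4)^2 := sq_nonneg _
  have s2 : (0:ℝ) ≤ (x*(1-x))*(8171931/1048576 - 12088353/524288*x + 5242771/131072*x^2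
      - 23813473/1048576*x^3)^2 :=
    mul_nonneg (mul_nonneg h0 (by linarith)) (sq_nonneg _)
  linarith

lemma fe_mul_fe {z w : ℂ} (hw : z * w = 1) :
    fe z * fe w = 1 + ((2+z+w)/4) * Qc ((2+z+w)/4) := by
  simp only [fe, Qc]
  linear_combination (4 + 6*w + (-10)*w^2 + (-21)*w^3 + 15*w^4 + 21*w^5 + (-7)*w^6 + (-9)*w^7 + 6*z + (-16)*z*w + (-54)*z*w^2 + 50*z*w^3 + 84*z*w^4 + (-27)*z*w^5 + (-35)*z*w^6 + 1*z*w^7 + (-10)*z^2 + (-54)*z^2*w + 74*z^2*w^2 + 156*z^2*w^3 + (-55)*z^2*w^4 + (-84)*z^2*w^5 + 1*z^2*w^6 + 1*z^2*w^7 + 1*z^2*w^8 + (-21)*z^3 + 50*z^3*w + 156*z^3*w^2 + (-67)*z^3*w^3 + (-124)*z^3*w^4 + 1*z^3*w^5 + 15*z^4 + 84*z^4*w + (-55)*z^4*w^2 + (-124)*z^4*w^3 + 3*z^4*w^4 + 2*z^4*w^5 + 1*z^4*w^6 + 21*z^5 + (-27)*z^5*w + (-84)*z^5*w^2 + 1*z^5*w^3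 + 2*z^5*w^4 + 3*z^5*w^5 + 2*z^5*w^6 + 1*z^5*w^7 + (-7)*z^6 + (-35)*z^6*w + 1*z^6*w^2 + 1*z^6*w^4 + 2*z^6*w^5 + 3*z^6*w^6 + 2*z^6*w^7 + 1*z^6*w^8 + (-9)*z^7 + 1*z^7*w + 1*z^7*w^2 + 1*z^7*w^5 + 2*z^7*w^6 + 2*z^7*w^7 + 1*z^7*w^8 + 1*z^8*w^2 + 1*z^8*w^6 + 1*z^8*w^7 + 1*z^8*w^8) * hw

lemma normSq_fe {z : ℂ} (hz : ‖z‖ = 1) :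
    Complex.normSq (fe z) = 1 + ((1+z.re)/2) * Qr ((1+z.re)/2) := by
  set w := (starRingEnd ℂ) z with hwdef
  have hns : Complex.normSq z = 1 := by
    rw [Complex.normSq_eq_norm_sq, hz]; norm_num
  have hw : z * w = 1 := by
    rw [hwdef, Complex.mul_conj, hns]; norm_num
  have h1 : (Complex.normSq (fe z) : ℂ) = fe z * fe w := by
    rw [Complex.normSq_eq_conj_mul_self]
    have hcfe : (starRingEnd ℂ) (fe z) = fe w := by
      simp [fe, map_add, map_pow, map_one, hwdef]
    rw [hcfe]; ring
  have hre : (2 + z + w : ℂ)/4 = (((1 + z.re)/2 : ℝ) : ℂ) := by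
    have hc := Complex.add_conj z
    rw [hwdef, show (2 + z + (starRingEnd ℂ) z : ℂ) = 2 + (z + (starRingEnd ℂ) z) by ring, hc]
    push_cast; ring
  have h2 : (Complex.normSq (fe z) : ℂ) = (((1 + ((1+z.re)/2) * Qr ((1+z.re)/2) : ℝ)) : ℂ) := by
    rw [h1, fe_mul_fe hw, hre]
    simp only [Qc, Qr]
    push_cast
    ring
  exact_mod_cast h2

lemma re_bound {z : ℂ} (hz : ‖z‖ = 1) : -1 ≤ z.re ∧ z.re ≤ 1 := by
  have := Complex.abs_re_le_norm z
  rw [hz] at this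
  constructor <;> cases' abs_le.1 this with h1 h2 <;> linarith

lemma abs_fe_ge {z : ℂ} (hz : ‖z‖ = 1) : 1 ≤ ‖(fe z)‖ := by
  obtain ⟨hr1, hr2⟩ := re_bound hz
  set x := (1+z.re)/2 with hx
  have hx0 : 0 ≤ x := by rw [hx]; linarith
  have hx1 : x ≤ 1 := by rw [hx]; linarith
  have hQ := Qr_ge hx0 hx1
  have h := normSq_fe hz
  have h2 : 1 ≤ Complex.normSq (fe z) := by rw [h]; nlinarith
  rw [← Complex.sq_norm] at h2
  nlinarith [norm_nonneg (fe z)]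

lemma abs_fe_gt {z : ℂ} (hz : ‖z‖ = 1) (hne : z ≠ -1) : 1 < ‖(fe z)‖ := by
  obtain ⟨hr1, hr2⟩ := re_bound hz
  have hre : -1 < z.re := by
    rcases lt_or_eq_of_le hr1 with h | h
    · exact h
    · exfalso
      apply hne
      have hns : Complex.normSq z = 1 := by rw [Complex.normSq_eq_norm_sq, hz]; norm_num
      have him : z.im = 0 := by
        have h2 : z.re * z.re + z.im * z.im = 1 := hns
        nlinarith [sq_nonneg z.im]
      apply Complex.ext <;> simp [← h, him]
  set x := (1+z.re)/2 with hx
  have hx0 : 0 < x := by rw [hx]; linarith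
  have hx1 : x ≤ 1 := by rw [hx]; linarith
  have hQ := Qr_ge hx0.le hx1
  have h := normSq_fe hz
  have h2 : 1 < Complex.normSq (fe z) := by rw [h]; nlinarith
  rw [← Complex.sq_norm] at h2
  nlinarith [norm_nonneg (fe z)]

lemma fe_ne_zero {z : ℂ} (hz : ‖z‖ = 1) : fe z ≠ 0 := by
  intro h
  have h2 := abs_fe_ge hz
  rw [h] at h2; simp at h2; linarith





def c1 : ℂ := ((-8713/10000 : ℝ) : ℂ)
def c2 : ℂ := ((3439/10000 : ℝ) : ℂ) + ((7683/10000 : ℝ) : ℂ) * Complex.I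
def c3 : ℂ := ((3439/10000 : ℝ) : ℂ) - ((7683/10000 : ℝ) : ℂ) * Complex.I
def c4 : ℂ := ((8141/10000 : ℝ) : ℂ) + ((4137/10000 : ℝ) : ℂ) * Complex.I
def c5 : ℂ := ((8141/10000 : ℝ) : ℂ) - ((4137/10000 : ℝ) : ℂ) * Complex.I
def c6 : ℂ := ((-9253/10000 : ℝ) : ℂ) + ((7111/10000 : ℝ) : ℂ) * Complex.I
def c7 : ℂ := ((-9253/10000 : ℝ) : ℂ) - ((7111/10000 : ℝ) : ℂ) * Complex.I
def c8 : ℂ := ((-2971/10000 : ℝ) : ℂ) + ((11567/10000 : ℝ) : ℂ) * Complex.I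
def c9 : ℂ := ((-2971/10000 : ℝ) : ℂ) - ((11567/10000 : ℝ) : ℂ) * Complex.I

def sH : Multiset ℂ := c1 ::ₘ c2 ::ₘ c3 ::ₘ c4 ::ₘ c5 ::ₘ c6 ::ₘ c7 ::ₘ c8 ::ₘ {c9}

def He (z : ℂ) : ℂ := ((sH.map (fun r => z - r)).prod)

def ddF (z : ℂ) : ℂ := ((-1311128413267275172176168939/20000000000000000000000000000000 : ℝ) : ℂ) + ((978840440094048080592393/50000000000000000000000000000 : ℝ) : ℂ) * z + ((-35159338297592031941/3125000000000000000000000 : ℝ) : ℂ) * z^2 + ((-227647717450260653/1250000000000000000000 : ℝ) : ℂ) * z^3 + ((-3890713835073643/12500000000000000000 : ℝ) : ℂ) * z^4 + ((-279980203693/1250000000000000 : ℝ) : ℂ) * z^5 + ((-2160249/31250000000 : ℝ) : ℂ) * z^6 + ((1179/12500000 : ℝ) : ℂ) * z^7 + ((1/10000 : ℝ) : ℂ) * z^8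

lemma pairmul (a b : ℝ) (z : ℂ) :
    (z - (((a : ℝ) : ℂ) + ((b : ℝ) : ℂ) * Complex.I)) * (z - (((a : ℝ) : ℂ) - ((b : ℝ) : ℂ) * Complex.I))
      = z^2 - 2*((a:ℝ):ℂ)*z + (((a:ℝ):ℂ)^2 + ((b:ℝ):ℂ)^2) := by
  linear_combination (-((b:ℝ):ℂ)^2) * Complex.I_sq

lemma He_eq (z : ℂ) : He z = fe z + ddF z := by
  have h0 : He z = (z - c1) * ((z - c2) * (z - c3)) * ((z - c4) * (z - c5))
      * ((z - c6) * (z - c7)) * ((z - c8) * (z - c9)) := by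
    simp only [He, sH, Multiset.map_cons, Multiset.prod_cons, Multiset.map_singleton,
      Multiset.prod_singleton]
    ring
  rw [h0]
  simp only [c1, c2, c3, c4, c5, c6, c7, c8, c9]
  rw [pairmul, pairmul, pairmul, pairmul]
  simp only [fe, ddF]
  push_cast
  ring

lemma absBnd {s t : ℂ} {bs bt : ℝ} (hs : ‖s‖ ≤ bs) (ht : ‖t‖ ≤ bt) :
    ‖(s + t)‖ ≤ bs + bt :=
  le_trans (norm_add_le s t) (add_le_add hs ht)

lemma term_abs {z : ℂ} (hz : ‖z‖ = 1) (c : ℝ) (k : ℕ) :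
    ‖(((c : ℝ) : ℂ) * z^k)‖ = |c| := by
  rw [norm_mul, norm_pow, hz, one_pow, mul_one, Complex.norm_real, Real.norm_eq_abs]

lemma ddF_bound {z : ℂ} (hz : ‖z‖ = 1) : ‖(ddF z)‖ ≤ 1/500 := by
  have e1 := term_abs hz (978840440094048080592393/50000000000000000000000000000) 1
  have e2 := term_abs hz (-35159338297592031941/3125000000000000000000000) 2
  have e3 := term_abs hz (-227647717450260653/1250000000000000000000) 3
  have e4 := term_abs hz (-3890713835073643/12500000000000000000) 4
  have e5 := term_abs hz (-279980203693/1250000000000000) 5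
  have e6 := term_abs hz (-2160249/31250000000) 6
  have e7 := term_abs hz (1179/12500000) 7
  have e8 := term_abs hz (1/10000) 8
  have e0 : ‖((( -1311128413267275172176168939/20000000000000000000000000000000 : ℝ) : ℂ))‖
      = |(-1311128413267275172176168939/20000000000000000000000000000000 : ℝ)| :=
    by rw [Complex.norm_real, Real.norm_eq_abs]
  simp only [ddF]
  rw [show (z^1 = z) from pow_one z] at e1
  calc ‖_‖ ≤ _ :=
        absBnd (absBnd (absBnd (absBnd (absBnd (absBnd (absBnd (absBnd e0.le e1.le) e2.le)
          e3.le) e4.le) e5.le) e6.le) e7.le) e8.le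
    _ ≤ 1/500 := by
        rw [_root_.abs_of_nonpos (by norm_num : (-1311128413267275172176168939/20000000000000000000000000000000 : ℝ) ≤ 0),
          _root_.abs_of_nonneg (by norm_num : (0:ℝ) ≤ 978840440094048080592393/50000000000000000000000000000),
          _root_.abs_of_nonpos (by norm_num : (-35159338297592031941/3125000000000000000000000 : ℝ) ≤ 0),
          _root_.abs_of_nonpos (by norm_num : (-227647717450260653/1250000000000000000000 : ℝ) ≤ 0),
          _root_.abs_of_nonpos (by norm_num : (-3890713835073643/12500000000000000000 : ℝ) ≤ 0),
          _root_.abs_of_nonpos (by norm_num : (-279980203693/1250000000000000 : ℝ) ≤ 0),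
          _root_.abs_of_nonpos (by norm_num : (-2160249/31250000000 : ℝ) ≤ 0),
          _root_.abs_of_nonneg (by norm_num : (0:ℝ) ≤ (1179/12500000 : ℝ)),
          _root_.abs_of_nonneg (by norm_num : (0:ℝ) ≤ (1/10000 : ℝ))]
        norm_num

lemma abs_lt_one_of_normSq {w : ℂ} (h : Complex.normSq w < 1) : ‖w‖ < 1 := by
  nlinarith [Complex.sq_norm w, norm_nonneg w]

lemma one_lt_abs_of_normSq {w : ℂ} (h : 1 < Complex.normSq w) : 1 < ‖w‖ := by
  nlinarith [Complex.sq_norm w, norm_nonneg w]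

lemma sub_mul_I_eq (a b : ℝ) : ((a:ℝ):ℂ) - ((b:ℝ):ℂ) * Complex.I = ((a:ℝ):ℂ) + ((-b:ℝ):ℂ) * Complex.I := by
  push_cast; ring

lemma c1_lt : ‖c1‖ < 1 := by
  rw [c1, Complex.norm_real, Real.norm_eq_abs]; rw [_root_.abs_of_nonpos (by norm_num)]; norm_num
lemma c2_lt : ‖c2‖ < 1 := by
  apply abs_lt_one_of_normSq; rw [c2, Complex.normSq_add_mul_I]; norm_num
lemma c3_lt : ‖c3‖ < 1 := by
  apply abs_lt_one_of_normSq; rw [c3, sub_mul_I_eq, Complex.normSq_add_mul_I]; norm_num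
lemma c4_lt : ‖c4‖ < 1 := by
  apply abs_lt_one_of_normSq; rw [c4, Complex.normSq_add_mul_I]; norm_num
lemma c5_lt : ‖c5‖ < 1 := by
  apply abs_lt_one_of_normSq; rw [c5, sub_mul_I_eq, Complex.normSq_add_mul_I]; norm_num
lemma c6_gt : 1 < ‖c6‖ := by
  apply one_lt_abs_of_normSq; rw [c6, Complex.normSq_add_mul_I]; norm_num
lemma c7_gt : 1 < ‖c7‖ := by
  apply one_lt_abs_of_normSq; rw [c7, sub_mul_I_eq, Complex.normSq_add_mul_I]; norm_num
lemma c8_gt : 1 < ‖c8‖ := by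
  apply one_lt_abs_of_normSq; rw [c8, Complex.normSq_add_mul_I]; norm_num
lemma c9_gt : 1 < ‖c9‖ := by
  apply one_lt_abs_of_normSq; rw [c9, sub_mul_I_eq, Complex.normSq_add_mul_I]; norm_num

lemma sH_ne_one : ∀ r ∈ sH, ‖r‖ ≠ 1 := by
  intro r hr
  simp only [sH, Multiset.mem_cons, Multiset.mem_singleton] at hr
  rcases hr with h|h|h|h|h|h|h|h|h <;> subst h
  · exact ne_of_lt c1_lt
  · exact ne_of_lt c2_lt
  · exact ne_of_lt c3_lt
  · exact ne_of_lt c4_lt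
  · exact ne_of_lt c5_lt
  · exact ne_of_gt c6_gt
  · exact ne_of_gt c7_gt
  · exact ne_of_gt c8_gt
  · exact ne_of_gt c9_gt

lemma sH_card : ((sH.filter (fun z => ‖z‖ < 1)).card) = 5 := by
  rw [sH]
  rw [Multiset.filter_cons_of_pos (p := fun z : ℂ => ‖z‖ < 1) _ c1_lt,
    Multiset.filter_cons_of_pos (p := fun z : ℂ => ‖z‖ < 1) _ c2_lt,
    Multiset.filter_cons_of_pos (p := fun z : ℂ => ‖z‖ < 1) _ c3_lt,
    Multiset.filter_cons_of_pos (p := fun z : ℂ => ‖z‖ < 1) _ c4_lt,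
    Multiset.filter_cons_of_pos (p := fun z : ℂ => ‖z‖ < 1) _ c5_lt,
    Multiset.filter_cons_of_neg (p := fun z : ℂ => ‖z‖ < 1) _ (not_lt.2 c6_gt.le),
    Multiset.filter_cons_of_neg (p := fun z : ℂ => ‖z‖ < 1) _ (not_lt.2 c7_gt.le),
    Multiset.filter_cons_of_neg (p := fun z : ℂ => ‖z‖ < 1) _ (not_lt.2 c8_gt.le)]
  simp [Multiset.filter_singleton, not_lt.2 c9_gt.le]



lemma diff_msProd (s : Multiset ℂ) :
    Differentiable ℂ (fun w => ((s.map (fun r => w - r)).prod)) := by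
  induction s using Multiset.induction_on with
  | empty => simpa using differentiable_const (1 : ℂ)
  | cons a s ih =>
    simp only [Multiset.map_cons, Multiset.prod_cons]
    exact (differentiable_id.sub_const a).mul ih

lemma msProd_ne_zero {s : Multiset ℂ} {z : ℂ} (h : ∀ r ∈ s, z ≠ r) :
    ((s.map (fun r => z - r)).prod) ≠ 0 := by
  induction s using Multiset.induction_on with
  | empty => simp
  | cons a s ih =>
    simp only [Multiset.map_cons, Multiset.prod_cons]
    exact mul_ne_zero (sub_ne_zero.2 (h a (Multiset.mem_cons_self a s)))
      (ih fun r hr => h r (Multiset.mem_cons_of_mem hr))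

lemma logDeriv_msProd (s : Multiset ℂ) (z : ℂ) (h : ∀ r ∈ s, z ≠ r) :
    logDeriv (fun w => ((s.map (fun r => w - r)).prod)) z
      = ((s.map (fun r => (z - r)⁻¹)).sum) := by
  induction s using Multiset.induction_on with
  | empty => simp
  | cons a s ih =>
    simp only [Multiset.map_cons, Multiset.prod_cons, Multiset.sum_cons]
    rw [logDeriv_mul (f := fun w : ℂ => w - a)
      (g := fun w => ((s.map (fun r => w - r)).prod)) z
      (sub_ne_zero.2 (h a (Multiset.mem_cons_self a s)))
      (msProd_ne_zero fun r hr => h r (Multiset.mem_cons_of_mem hr))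
      (differentiableAt_fun_id.sub_const a) (diff_msProd s).differentiableAt,
      ih fun r hr => h r (Multiset.mem_cons_of_mem hr)]
    congr 1
    rw [logDeriv_apply]
    have : deriv (fun w : ℂ => w - a) z = 1 := by
      simpa using ((hasDerivAt_id z).sub_const a).deriv
    rw [this, one_div]

lemma cont_inv_circle {r : ℂ} (hr : ‖r‖ ≠ 1) :
    Continuous (fun θ : ℝ => (circleMap 0 1 θ - r)⁻¹) := by
  apply Continuous.inv₀ ((continuous_circleMap 0 1).sub continuous_const)
  intro θ
  apply sub_ne_zero.2
  intro hc
  apply hr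
  simp only at hc
  rw [← hc, norm_circleMap_zero]
  norm_num

lemma cont_sum_circle (s : Multiset ℂ) (h : ∀ r ∈ s, ‖r‖ ≠ 1) :
    Continuous (fun θ : ℝ => ((s.map (fun r => (circleMap 0 1 θ - r)⁻¹)).sum)) := by
  induction s using Multiset.induction_on with
  | empty => simpa using continuous_const
  | cons a s ih =>
    simp only [Multiset.map_cons, Multiset.sum_cons]
    exact (cont_inv_circle (h a (Multiset.mem_cons_self a s))).add
      (ih fun r hr => h r (Multiset.mem_cons_of_mem hr))

lemma circleInt_sum (s : Multiset ℂ) (h : ∀ r ∈ s, ‖r‖ ≠ 1) :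
    CircleIntegrable (fun z => ((s.map (fun r => (z - r)⁻¹)).sum)) 0 1 :=
  (cont_sum_circle s h).intervalIntegrable _ _

lemma int_single {r : ℂ} (h : ‖r‖ ≠ 1) :
    (∮ z in C(0,1), (z - r)⁻¹) = if ‖r‖ < 1 then (2 * Real.pi * I) else 0 := by
  split_ifs with hlt
  · exact circleIntegral.integral_sub_inv_of_mem_ball (by simpa [mem_ball_zero_iff] using hlt)
  · have hgt : 1 < ‖r‖ := lt_of_le_of_ne (not_lt.1 hlt) (Ne.symm h)
    apply circleIntegral_eq_zero_of_differentiable_on_off_countable zero_le_one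
      Set.countable_empty
    · apply ContinuousOn.inv₀ ((continuous_sub_right r).continuousOn)
      intro z hz
      rw [mem_closedBall_zero_iff] at hz
      intro hc
      have h2 : (1:ℝ) < ‖z‖ := (sub_eq_zero.1 hc) ▸ hgt
      linarith
    · intro z hz
      apply DifferentiableAt.inv (differentiableAt_fun_id.sub_const r)
      have hz1 := mem_ball_zero_iff.1 hz.1
      intro hc
      have h2 : (1:ℝ) < ‖z‖ := (sub_eq_zero.1 hc) ▸ hgt
      linarith

lemma int_multiset (s : Multiset ℂ) (h : ∀ r ∈ s, ‖r‖ ≠ 1) :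
    (∮ z in C(0,1), ((s.map (fun r => (z - r)⁻¹)).sum))
      = (2 * Real.pi * I) * ((s.filter (fun z => ‖z‖ < 1)).card : ℂ) := by
  induction s using Multiset.induction_on with
  | empty => simp [circleIntegral]
  | cons a s ih =>
    have ha := h a (Multiset.mem_cons_self a s)
    have hs : ∀ r ∈ s, ‖r‖ ≠ 1 := fun r hr => h r (Multiset.mem_cons_of_mem hr)
    have hadd : (∮ z in C(0,1), ((((a ::ₘ s)).map (fun r => (z - r)⁻¹)).sum))
        = (∮ z in C(0,1), (z - a)⁻¹)
          + ∮ z in C(0,1), ((s.map (fun r => (z - r)⁻¹)).sum) := by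
      have i1 : CircleIntegrable (fun z => (z - a)⁻¹) 0 1 :=
        (cont_inv_circle ha).intervalIntegrable _ _
      have i2 := circleInt_sum s hs
      simp only [Multiset.map_cons, Multiset.sum_cons]
      simp only [circleIntegral, smul_add]
      exact intervalIntegral.integral_add i1.out i2.out
    rw [hadd, ih hs, int_single ha]
    by_cases hlt : ‖a‖ < 1
    · rw [if_pos hlt, Multiset.filter_cons_of_pos (p := fun z : ℂ => ‖z‖ < 1) _ hlt]
      rw [Multiset.card_cons]
      push_cast
      ring
    · rw [if_neg hlt, Multiset.filter_cons_of_neg (p := fun z : ℂ => ‖z‖ < 1) _ hlt]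
      ring


def Pp : Polynomial ℂ := 1 + X^3 + X^7 + X^8 + X^9

lemma Pp_monic : Pp.Monic := by
  have h : Pp = X^9 + (1 + X^3 + X^7 + X^8) := by rw [Pp]; ring
  rw [h]
  apply Polynomial.monic_X_pow_add (n := 9)
  apply lt_of_le_of_lt (b := (8 : WithBot ℕ))
  · compute_degree
  · norm_num

lemma Pp_eval (z : ℂ) : Pp.eval z = fe z := by
  simp [Pp, fe]

lemma fe_prod (z : ℂ) : fe z = ((Pp.roots.map (fun r => z - r)).prod) := by
  have h := (IsAlgClosed.splits Pp).eq_prod_roots_of_monic Pp_monic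
  rw [← Pp_eval]
  conv_lhs => rw [h]
  rw [Polynomial.eval_multiset_prod, Multiset.map_map]
  congr 1
  apply Multiset.map_congr rfl
  intro r _
  simp

lemma Pp_roots_ne : ∀ r ∈ Pp.roots, ‖r‖ ≠ 1 := by
  intro r hr habs
  have h0 : Pp ≠ 0 := Pp_monic.ne_zero
  have hroot := (Polynomial.mem_roots h0).1 hr
  have : fe r = 0 := by rw [← Pp_eval]; exact hroot
  exact fe_ne_zero habs this

lemma He_abs_ge {z : ℂ} (hz : ‖z‖ = 1) : 499/500 ≤ ‖(He z)‖ := by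
  have h1 := abs_fe_ge hz
  have h2 := ddF_bound hz
  have h3 : ‖(fe z)‖ ≤ ‖(He z)‖ + ‖(ddF z)‖ := by
    calc ‖(fe z)‖ = ‖(He z + (- ddF z))‖ := by rw [He_eq]; ring_nf
      _ ≤ ‖(He z)‖ + ‖(- ddF z)‖ := norm_add_le _ _
      _ = ‖(He z)‖ + ‖(ddF z)‖ := by rw [norm_neg]
  linarith

lemma He_ne_zero {z : ℂ} (hz : ‖z‖ = 1) : He z ≠ 0 := by
  intro h
  have := He_abs_ge hz
  rw [h] at this
  simp at this
  linarith

lemma G_slit {z : ℂ} (hz : ‖z‖ = 1) : fe z / He z ∈ slitPlane := by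
  have hHne := He_ne_zero hz
  have h1 : fe z / He z = 1 + (-(ddF z)) / He z := by
    rw [eq_comm]
    field_simp
    rw [He_eq]
    ring
  rw [h1]
  apply mem_slitPlane_of_norm_lt_one
  have h2 := ddF_bound hz
  have h3 := He_abs_ge hz
  rw [norm_div, norm_neg]
  rw [div_lt_one (by linarith)]
  linarith

lemma fe_diff : Differentiable ℂ fe := by
  unfold fe
  fun_prop

lemma He_diff : Differentiable ℂ He := diff_msProd sH

lemma intF_eq_intH :
    (∮ z in C(0,1), ((Pp.roots.map (fun r => (z - r)⁻¹)).sum))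
      = ∮ z in C(0,1), ((sH.map (fun r => (z - r)⁻¹)).sum) := by
  have iF := circleInt_sum Pp.roots Pp_roots_ne
  have iH := circleInt_sum sH sH_ne_one
  have hsub : (∮ z in C(0,1), (((Pp.roots.map (fun r => (z - r)⁻¹)).sum)
      - ((sH.map (fun r => (z - r)⁻¹)).sum))) = 0 := by
    have hder : ∀ θ : ℝ, HasDerivAt
        (fun t => Complex.log (fe (circleMap 0 1 t) / He (circleMap 0 1 t)))
        (deriv (circleMap 0 1) θ • (((Pp.roots.map (fun r => (circleMap 0 1 θ - r)⁻¹)).sum)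
          - ((sH.map (fun r => (circleMap 0 1 θ - r)⁻¹)).sum))) θ := by
      intro θ
      set ζ := circleMap 0 1 θ with hζdef
      have hζ : ‖ζ‖ = 1 := by
        rw [hζdef, norm_circleMap_zero]; norm_num
      have hfne : fe ζ ≠ 0 := fe_ne_zero hζ
      have hHne : He ζ ≠ 0 := He_ne_zero hζ
      have hζroots : ∀ r ∈ Pp.roots, ζ ≠ r := by
        intro r hr hc
        exact Pp_roots_ne r hr (hc ▸ hζ)
      have hζsH : ∀ r ∈ sH, ζ ≠ r := by
        intro r hr hc
        exact sH_ne_one r hr (hc ▸ hζ)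
      have hG : DifferentiableAt ℂ (fun w => fe w / He w) ζ :=
        (fe_diff ζ).div (He_diff ζ) hHne
      have h1 : HasDerivAt (circleMap 0 1) (ζ * I) θ := by
        simpa [hζdef] using hasDerivAt_circleMap 0 1 θ
      have h3 : HasDerivAt ((fun w => fe w / He w) ∘ (circleMap 0 1))
          (deriv (fun w => fe w / He w) ζ * (ζ * I)) θ :=
        (hG.hasDerivAt).comp θ h1
      have h4 : HasDerivAt (Complex.log ∘ ((fun w => fe w / He w) ∘ (circleMap 0 1)))
          ((fe ζ / He ζ)⁻¹ * (deriv (fun w => fe w / He w) ζ * (ζ * I))) θ :=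
        (Complex.hasDerivAt_log (G_slit hζ)).comp θ h3
      have hld : (fe ζ / He ζ)⁻¹ * deriv (fun w => fe w / He w) ζ
          = ((Pp.roots.map (fun r => (ζ - r)⁻¹)).sum)
            - ((sH.map (fun r => (ζ - r)⁻¹)).sum) := by
        rw [inv_mul_eq_div, ← logDeriv_apply]
        rw [logDeriv_div ζ hfne hHne (fe_diff ζ) (He_diff ζ)]
        congr 1
        · have hfeF : fe = (fun w => ((Pp.roots.map (fun r => w - r)).prod)) :=
            funext fun w => fe_prod w
          rw [hfeF]
          exact logDeriv_msProd Pp.roots ζ hζroots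
        · exact logDeriv_msProd sH ζ hζsH
      have hval : ((fe ζ / He ζ)⁻¹ * (deriv (fun w => fe w / He w) ζ * (ζ * I)))
          = deriv (circleMap 0 1) θ • (((Pp.roots.map (fun r => (ζ - r)⁻¹)).sum)
            - ((sH.map (fun r => (ζ - r)⁻¹)).sum)) := by
        rw [deriv_circleMap, smul_eq_mul]
        calc (fe ζ / He ζ)⁻¹ * (deriv (fun w => fe w / He w) ζ * (ζ * I))
            = ((fe ζ / He ζ)⁻¹ * deriv (fun w => fe w / He w) ζ) * (ζ * I) := by ring
          _ = (((Pp.roots.map (fun r => (ζ - r)⁻¹)).sum)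
              - ((sH.map (fun r => (ζ - r)⁻¹)).sum)) * (ζ * I) := by rw [hld]
          _ = _ := by rw [← hζdef]; ring
      rw [← hval]
      exact h4
    have hint : IntervalIntegrable (fun θ : ℝ => deriv (circleMap 0 1) θ
        • (((Pp.roots.map (fun r => (circleMap 0 1 θ - r)⁻¹)).sum)
          - ((sH.map (fun r => (circleMap 0 1 θ - r)⁻¹)).sum))) MeasureTheory.volume 0 (2*π) := by
      apply Continuous.intervalIntegrable
      have hc1 : Continuous (fun θ : ℝ => deriv (circleMap 0 1) θ) := by
        have : (fun θ : ℝ => deriv (circleMap 0 1) θ) = fun θ => circleMap 0 1 θ * I :=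
          funext fun θ => deriv_circleMap 0 1 θ
        rw [this]
        exact (continuous_circleMap 0 1).mul continuous_const
      exact hc1.smul ((cont_sum_circle Pp.roots Pp_roots_ne).sub (cont_sum_circle sH sH_ne_one))
    have hcirc : circleMap 0 1 (2*π) = circleMap 0 1 0 := by
      simpa using periodic_circleMap 0 1 0
    rw [circleIntegral]
    rw [intervalIntegral.integral_eq_sub_of_hasDerivAt (fun θ _ => hder θ) hint]
    rw [hcirc]
    exact sub_self _
  have := circleIntegral.integral_sub iF iH
  rw [show (fun z : ℂ => (((Pp.roots.map (fun r => (z - r)⁻¹)).sum)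
      - ((sH.map (fun r => (z - r)⁻¹)).sum)))
    = (fun z : ℂ => (fun z => ((Pp.roots.map (fun r => (z - r)⁻¹)).sum)) z
      - (fun z => ((sH.map (fun r => (z - r)⁻¹)).sum)) z) from rfl] at hsub
  rw [this] at hsub
  exact sub_eq_zero.1 hsub


lemma count_eq : ((Pp.roots.filter (fun z => ‖z‖ < 1)).card) = 5 := by
  have hF := int_multiset Pp.roots Pp_roots_ne
  have hH := int_multiset sH sH_ne_one
  rw [intF_eq_intH] at hF
  rw [sH_card] at hH
  have hpi : (2 * Real.pi * I : ℂ) ≠ 0 :=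
    mul_ne_zero (mul_ne_zero two_ne_zero (Complex.ofReal_ne_zero.2 Real.pi_ne_zero))
      Complex.I_ne_zero
  have hcast := mul_left_cancel₀ hpi (hH.symm.trans hF)
  exact_mod_cast hcast.symm

end

end Aux

theorem stmt_12 :
    diskZeros (1 + X ^ 3 + X ^ 7 + X ^ 8 + X ^ 9 : Polynomial ℂ) = 5 ∧
    (1 + X ^ 3 + X ^ 7 + X ^ 8 + X ^ 9 : Polynomial ℂ).eval (-1) = -1 ∧
    ∀ z : ℂ, ‖z‖ = 1 → z ≠ -1 →
      1 < ‖(1 + X ^ 3 + X ^ 7 + X ^ 8 + X ^ 9 : Polynomial ℂ).eval z‖ := by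
  refine ⟨?_, ?_, ?_⟩
  · exact count_eq
  · exact (Pp_eval (-1)).trans (by norm_num [fe])
  · intro z hz hne
    rw [show (1 + X ^ 3 + X ^ 7 + X ^ 8 + X ^ 9 : Polynomial ℂ).eval z = fe z from Pp_eval z]
    exact abs_fe_gt hz hne
end

section
/- No Newman polynomial of degree 6 (coefficients in {0,1}, constant term 1, leading coefficient 1) has exactly 3 zeros in the open unit disk and no zeros on the unit circle. -/
open Polynomial

open Complex in
/-- A conjugation-invariant multiset of complex numbers splits its non-real part into the
part with positive imaginary part and its conjugate. -/
lemma filter_ne_decomp (M : Multiset ℂ) (h : M.map (starRingEnd ℂ) = M) :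
    M.filter (fun z => z.im ≠ 0) =
      M.filter (fun z => 0 < z.im) + (M.filter (fun z => 0 < z.im)).map (starRingEnd ℂ) := by
  have hv : M.filter (fun z => z.im < 0) = (M.filter (fun z => 0 < z.im)).map (starRingEnd ℂ) := by
    conv_lhs => rw [← h]
    rw [Multiset.filter_map]
    congr 1
    apply Multiset.filter_congr
    intro z _
    simp only [Function.comp]
    constructor
    · intro hz
      simpa using hz
    · intro hz
      simpa using hz
  rw [← hv]
  have := Multiset.filter_add_filter (fun z : ℂ => 0 < z.im) (fun z : ℂ => z.im < 0) M
  have h2 : M.filter (fun z : ℂ => 0 < z.im ∧ z.im < 0) = 0 := by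
    rw [Multiset.filter_eq_nil]
    intro z _ hz
    exact absurd (hz.1.trans hz.2) (lt_irrefl _)
  rw [h2, add_zero] at this
  rw [this]
  apply Multiset.filter_congr
  intro z _
  constructor
  · intro hz
    rcases hz.lt_or_gt with h' | h'
    · exact Or.inr h'
    · exact Or.inl h'
  · intro hz
    rcases hz with h' | h'
    · exact ne_of_gt h'
    · exact ne_of_lt h'

lemma multiset_prod_eq_neg_pow (s : Multiset ℝ) :
    s.prod = (-1) ^ (Multiset.card s) * (s.map (fun x => -x)).prod := by
  induction s using Multiset.induction_on with
  | empty => simp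
  | cons a s ih =>
    rw [Multiset.prod_cons, Multiset.map_cons, Multiset.prod_cons, Multiset.card_cons, ih,
      pow_succ]
    ring

/-- Product of an odd number of negative reals is negative. -/
lemma multiset_prod_neg (s : Multiset ℝ) (h : ∀ x ∈ s, x < 0) (hodd : Odd (Multiset.card s)) :
    s.prod < 0 := by
  rw [multiset_prod_eq_neg_pow, hodd.neg_one_pow]
  have hpos : 0 < (s.map (fun x => -x)).prod := by
    apply Multiset.prod_pos
    intro a ha
    rcases Multiset.mem_map.mp ha with ⟨x, hx, rfl⟩
    simpa using h x hx
  linarith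

open Complex in
lemma exists_circle_root : ∃ z : ℂ, ‖z‖ = 1 ∧ 1 + z + z ^ 3 + z ^ 5 + z ^ 6 = 0 := by
  obtain ⟨θ, _, hθ⟩ :
      ∃ θ ∈ Set.Icc 0 (Real.pi / 2), 2 * Real.cos (3 * θ) + 2 * Real.cos (2 * θ) + 1 = 0 := by
    have hle : (0 : ℝ) ≤ Real.pi / 2 := by positivity
    have hc : ContinuousOn (fun θ : ℝ => 2 * Real.cos (3 * θ) + 2 * Real.cos (2 * θ) + 1)
        (Set.Icc 0 (Real.pi / 2)) := by fun_prop
    have h := intermediate_value_Icc' hle hc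
    have h0 : (2 * Real.cos (3 * 0) + 2 * Real.cos (2 * 0) + 1 : ℝ) = 5 := by norm_num
    have hpi : (2 * Real.cos (3 * (Real.pi / 2)) + 2 * Real.cos (2 * (Real.pi / 2)) + 1 : ℝ)
        = -1 := by
      have h1 : (3 : ℝ) * (Real.pi / 2) = Real.pi / 2 + Real.pi := by ring
      have h2 : (2 : ℝ) * (Real.pi / 2) = Real.pi := by ring
      rw [h1, h2, Real.cos_add_pi, Real.cos_pi_div_two, Real.cos_pi]
      norm_num
    have hmem : (0 : ℝ) ∈ Set.Icc
        ((fun θ : ℝ => 2 * Real.cos (3 * θ) + 2 * Real.cos (2 * θ) + 1) (Real.pi / 2))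
        ((fun θ : ℝ => 2 * Real.cos (3 * θ) + 2 * Real.cos (2 * θ) + 1) 0) := by
      simp only [hpi, h0]
      constructor <;> norm_num
    obtain ⟨θ, hθ1, hθ2⟩ := h hmem
    exact ⟨θ, hθ1, hθ2⟩
  refine ⟨Complex.exp (θ * I), Complex.norm_exp_ofReal_mul_I θ, ?_⟩
  have key : 1 + Complex.exp (θ * I) + Complex.exp (θ * I) ^ 3 + Complex.exp (θ * I) ^ 5
      + Complex.exp (θ * I) ^ 6 = Complex.exp (θ * I) ^ 3 *
      ((2 * Real.cos (3 * θ) + 2 * Real.cos (2 * θ) + 1 : ℝ) : ℂ) := by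
    push_cast
    rw [Complex.two_cos, Complex.two_cos]
    have hz3 : Complex.exp (θ * I) ^ 3 = Complex.exp (3 * (θ : ℂ) * I) := by
      rw [show (3 : ℂ) * (θ : ℂ) * I = ((3 : ℕ) : ℂ) * ((θ : ℂ) * I) by push_cast; ring,
        Complex.exp_nat_mul]
    have hz5 : Complex.exp (θ * I) ^ 5 = Complex.exp (5 * (θ : ℂ) * I) := by
      rw [show (5 : ℂ) * (θ : ℂ) * I = ((5 : ℕ) : ℂ) * ((θ : ℂ) * I) by push_cast; ring,
        Complex.exp_nat_mul]
    have hz6 : Complex.exp (θ * I) ^ 6 = Complex.exp (6 * (θ : ℂ) * I) := by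
      rw [show (6 : ℂ) * (θ : ℂ) * I = ((6 : ℕ) : ℂ) * ((θ : ℂ) * I) by push_cast; ring,
        Complex.exp_nat_mul]
    rw [hz3, hz5, hz6]
    have e1 : Complex.exp (3 * (θ:ℂ) * I) * Complex.exp (3 * (θ:ℂ) * I)
        = Complex.exp (6 * (θ:ℂ) * I) := by rw [← Complex.exp_add]; ring_nf
    have e2 : Complex.exp (3 * (θ:ℂ) * I) * Complex.exp (-(3 * (θ:ℂ)) * I) = 1 := by
      rw [← Complex.exp_add, show 3 * (θ:ℂ) * I + -(3 * (θ:ℂ)) * I = 0 by ring,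
        Complex.exp_zero]
    have e3 : Complex.exp (3 * (θ:ℂ) * I) * Complex.exp (2 * (θ:ℂ) * I)
        = Complex.exp (5 * (θ:ℂ) * I) := by rw [← Complex.exp_add]; ring_nf
    have e4 : Complex.exp (3 * (θ:ℂ) * I) * Complex.exp (-(2 * (θ:ℂ)) * I)
        = Complex.exp ((θ:ℂ) * I) := by rw [← Complex.exp_add]; ring_nf
    calc 1 + Complex.exp ((θ:ℂ) * I) + Complex.exp (3 * (θ:ℂ) * I)
          + Complex.exp (5 * (θ:ℂ) * I) + Complex.exp (6 * (θ:ℂ) * I)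
        = Complex.exp (3 * (θ:ℂ) * I) * Complex.exp (3 * (θ:ℂ) * I)
          + Complex.exp (3 * (θ:ℂ) * I) * Complex.exp (-(3 * (θ:ℂ)) * I)
          + Complex.exp (3 * (θ:ℂ) * I) * Complex.exp (2 * (θ:ℂ) * I)
          + Complex.exp (3 * (θ:ℂ) * I) * Complex.exp (-(2 * (θ:ℂ)) * I)
          + Complex.exp (3 * (θ:ℂ) * I) := by rw [e1, e2, e3, e4]; ring
      _ = Complex.exp (3 * (θ:ℂ) * I) *
          (Complex.exp (3 * (θ:ℂ) * I) + Complex.exp (-(3 * (θ:ℂ)) * I)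
            + (Complex.exp (2 * (θ:ℂ) * I) + Complex.exp (-(2 * (θ:ℂ)) * I)) + 1) := by ring
      _ = _ := by rw [← hz3]
  rw [key, hθ]
  simp

lemma multiset_coe_prod (m : Multiset ℝ) :
    (m.map (fun x : ℝ => (x : ℂ))).prod = ((m.prod : ℝ) : ℂ) := by
  induction m using Multiset.induction_on with
  | empty => simp
  | cons a t ih => simp [ih]

theorem stmt_14 (f : Polynomial ℂ)
    (hdeg : f.natDegree = 6)
    (h0 : f.coeff 0 = 1) (h6 : f.coeff 6 = 1)
    (hcoeff : ∀ j, f.coeff j = 0 ∨ f.coeff j = 1) :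
    ¬ (diskZeros f = 3 ∧ ∀ z : ℂ, ‖z‖ = 1 → f.eval z ≠ 0) := by
  classical
  rintro ⟨h3, hcirc⟩
  have hmonic : f.Monic := by
    have : f.leadingCoeff = 1 := by rw [Polynomial.leadingCoeff, hdeg]; exact h6
    exact this
  have hf0 : f ≠ 0 := hmonic.ne_zero
  have hsplits : f.Splits := IsAlgClosed.splits f
  have hcard : Multiset.card f.roots = 6 := by
    have := (Polynomial.splits_iff_card_roots.mp hsplits)
    rw [hdeg] at this
    exact this
  have hmap : f.map (starRingEnd ℂ) = f := by
    ext n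
    rw [Polynomial.coeff_map]
    rcases hcoeff n with h | h <;> rw [h] <;> simp
  have hMconj : f.roots.map (starRingEnd ℂ) = f.roots := by
    conv_rhs => rw [← hmap, hsplits.roots_map (starRingEnd ℂ)]
  have hroot : ∀ z ∈ f.roots, f.eval z = 0 := by
    intro z hz
    exact ((Polynomial.mem_roots'.mp hz).2 : f.IsRoot z)
  have habs : ∀ z ∈ f.roots, ‖z‖ ≠ 1 := fun z hz h1 => hcirc z h1 (hroot z hz)
  have heval : ∀ z : ℂ, f.eval z = ∑ i ∈ Finset.range 7, f.coeff i * z ^ i := by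
    intro z
    have := Polynomial.eval_eq_sum_range (p := f) z
    rwa [hdeg] at this
  -- real roots are negative
  have hneg : ∀ z ∈ f.roots, z.im = 0 → z.re < 0 := by
    intro z hz him
    by_contra hre
    push_neg at hre
    have hz0 : z = (z.re : ℂ) := Complex.ext (by simp) (by simp [him])
    have he := hroot z hz
    rw [heval z] at he
    have hrepos : (1 : ℝ) ≤ (∑ i ∈ Finset.range 7, f.coeff i * z ^ i).re := by
      rw [Complex.re_sum]
      have hterm : ∀ i ∈ Finset.range 7, 0 ≤ (f.coeff i * z ^ i).re := by
        intro i _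
        rcases hcoeff i with h | h <;> rw [h]
        · simp
        · rw [one_mul, hz0, ← Complex.ofReal_pow, Complex.ofReal_re]
          exact pow_nonneg hre i
      have h1le : (1 : ℝ) = (f.coeff 0 * z ^ 0).re := by rw [h0]; simp
      rw [h1le]
      exact Finset.single_le_sum hterm (by simp)
    rw [he] at hrepos
    norm_num at hrepos
  -- conjugation invariance of the inside-disk roots
  have hsconj : (f.roots.filter (fun z => ‖z‖ < 1)).map (starRingEnd ℂ)
      = f.roots.filter (fun z => ‖z‖ < 1) := by
    calc (f.roots.filter (fun z => ‖z‖ < 1)).map (starRingEnd ℂ)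
        = (f.roots.filter (fun z => ‖(starRingEnd ℂ) z‖ < 1)).map
            (starRingEnd ℂ) := by
          congr 1
          apply Multiset.filter_congr
          intro z _
          simp
      _ = Multiset.filter (fun z => ‖z‖ < 1) (f.roots.map (starRingEnd ℂ)) := by
          rw [Multiset.filter_map]
          rfl
      _ = _ := by rw [hMconj]
  -- parity: odd number of real roots inside the disk
  have hparity : Odd (Multiset.card ((f.roots.filter (fun z => ‖z‖ < 1)).filter
      (fun z => z.im = 0))) := by
    set s := f.roots.filter (fun z => ‖z‖ < 1) with hs
    have hdec := Multiset.filter_add_not (fun z : ℂ => z.im = 0) s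
    have hne := filter_ne_decomp s hsconj
    have hcards : Multiset.card s = 3 := h3
    have h1 : Multiset.card s = Multiset.card (s.filter (fun z => z.im = 0))
        + Multiset.card (s.filter (fun z => ¬ z.im = 0)) := by
      rw [← Multiset.card_add, hdec]
    have h2 : Multiset.card (s.filter (fun z => ¬ z.im = 0))
        = 2 * Multiset.card (s.filter (fun z => 0 < z.im)) := by
      have : s.filter (fun z => ¬ z.im = 0) = s.filter (fun z => z.im ≠ 0) := rfl
      rw [this, hne, Multiset.card_add, Multiset.card_map]
      ring
    rw [hcards, h2] at h1
    rw [Nat.odd_iff]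
    omega
  -- factor f over its roots and evaluate at -1
  have hfactor : f = (f.roots.map (fun a => X - C a)).prod :=
    hsplits.eq_prod_roots_of_monic hmonic
  have hevalm1 : f.eval (-1) = (f.roots.map (fun a => -1 - a)).prod := by
    conv_lhs => rw [hfactor]
    rw [Polynomial.eval_multiset_prod, Multiset.map_map]
    exact congrArg _ (Multiset.map_congr rfl (fun a _ => by simp))
  -- decompose the roots
  have hMdec : f.roots = f.roots.filter (fun z => ‖z‖ < 1 ∧ z.im = 0)
      + f.roots.filter (fun z => ¬ ‖z‖ < 1 ∧ z.im = 0)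
      + f.roots.filter (fun z => z.im ≠ 0) := by
    have h1 := Multiset.filter_add_not (fun z : ℂ => z.im = 0) f.roots
    have h2 := Multiset.filter_add_not (fun z : ℂ => ‖z‖ < 1)
      (f.roots.filter (fun z : ℂ => z.im = 0))
    rw [Multiset.filter_filter, Multiset.filter_filter] at h2
    conv_lhs => rw [← h1, ← h2]
  set A := f.roots.filter (fun z => ‖z‖ < 1 ∧ z.im = 0) with hA
  set B := f.roots.filter (fun z => ¬ ‖z‖ < 1 ∧ z.im = 0) with hB
  set T := f.roots.filter (fun z => z.im ≠ 0) with hT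
  have hprodsplit : f.eval (-1) = (A.map (fun a => -1 - a)).prod
      * (B.map (fun a => -1 - a)).prod * (T.map (fun a => -1 - a)).prod := by
    rw [hevalm1]
    conv_lhs => rw [hMdec]
    rw [Multiset.map_add, Multiset.map_add, Multiset.prod_add, Multiset.prod_add]
  -- A part: negative real
  have hAre : (A.map (fun a => (-1 : ℂ) - a)) = (A.map (fun z => (-1 - z.re : ℝ))).map
      (fun x : ℝ => (x : ℂ)) := by
    rw [Multiset.map_map]
    apply Multiset.map_congr rfl
    intro z hz
    have him : z.im = 0 := (Multiset.of_mem_filter hz).2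
    have hz0 : z = (z.re : ℂ) := Complex.ext (by simp) (by simp [him])
    simp only [Function.comp]
    simp [Complex.ext_iff, him]
  have hAneg : ((A.map (fun z => (-1 - z.re : ℝ)))).prod < 0 := by
    apply multiset_prod_neg
    · intro x hx
      rcases Multiset.mem_map.mp hx with ⟨z, hz, rfl⟩
      have hzM : z ∈ f.roots := Multiset.mem_of_mem_filter hz
      have habs1 : ‖z‖ < 1 := (Multiset.of_mem_filter hz).1
      have : |z.re| ≤ ‖z‖ := Complex.abs_re_le_norm z
      have : -1 < z.re := by
        have := abs_lt.mp (lt_of_le_of_lt this habs1)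
        exact this.1
      linarith
    · rw [Multiset.card_map]
      have : A = (f.roots.filter (fun z => ‖z‖ < 1)).filter
          (fun z => z.im = 0) := by
        rw [hA, Multiset.filter_filter]
        exact (Multiset.filter_congr (fun z _ => and_comm)).symm
      rw [this]
      exact hparity
  -- B part: positive real
  have hBre : (B.map (fun a => (-1 : ℂ) - a)) = (B.map (fun z => (-1 - z.re : ℝ))).map
      (fun x : ℝ => (x : ℂ)) := by
    rw [Multiset.map_map]
    apply Multiset.map_congr rfl
    intro z hz
    have him : z.im = 0 := (Multiset.of_mem_filter hz).2
    have hz0 : z = (z.re : ℂ) := Complex.ext (by simp) (by simp [him])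
    simp only [Function.comp]
    simp [Complex.ext_iff, him]
  have hBpos : (0 : ℝ) < ((B.map (fun z => (-1 - z.re : ℝ)))).prod := by
    apply Multiset.prod_pos
    intro x hx
    rcases Multiset.mem_map.mp hx with ⟨z, hz, rfl⟩
    have hzM : z ∈ f.roots := Multiset.mem_of_mem_filter hz
    have him : z.im = 0 := (Multiset.of_mem_filter hz).2
    have hnl : ¬ ‖z‖ < 1 := (Multiset.of_mem_filter hz).1
    have hz0 : z = (z.re : ℂ) := Complex.ext (by simp) (by simp [him])
    have habsz : ‖z‖ = |z.re| := by rw [hz0]; simp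
    have hrneg : z.re < 0 := hneg z hzM him
    have h1 : 1 < |z.re| := by
      rcases lt_or_eq_of_le (not_lt.mp hnl) with h | h
      · rw [habsz] at h; exact h
      · exact absurd h.symm (habs z hzM)
    rw [abs_of_neg hrneg] at h1
    linarith
  -- T part: positive real (product of conjugate pairs)
  have hTprod : ∃ n : ℝ, 0 < n ∧ (T.map (fun a => (-1 : ℂ) - a)).prod = (n : ℂ) := by
    have hTdec : T = f.roots.filter (fun z => 0 < z.im)
        + (f.roots.filter (fun z => 0 < z.im)).map (starRingEnd ℂ) :=
      filter_ne_decomp f.roots hMconj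
    set u := f.roots.filter (fun z => 0 < z.im) with hu
    set w := (u.map (fun a => (-1 : ℂ) - a)).prod with hw
    have hcomm : ((u.map (starRingEnd ℂ)).map (fun a => (-1 : ℂ) - a)).prod
        = (starRingEnd ℂ) w := by
      rw [Multiset.map_map]
      have : (fun a : ℂ => (-1 : ℂ) - a) ∘ (starRingEnd ℂ)
          = (starRingEnd ℂ) ∘ (fun a : ℂ => (-1 : ℂ) - a) := by
        funext a
        simp [Function.comp, map_sub]
      rw [this, ← Multiset.map_map, hw]
      exact (map_multiset_prod (starRingEnd ℂ) _).symm
    have hwne : w ≠ 0 := by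
      rw [hw]
      apply Multiset.prod_ne_zero
      intro h0'
      rcases Multiset.mem_map.mp h0' with ⟨z, hz, hz2⟩
      have : z = -1 := by linear_combination -hz2
      have him : 0 < z.im := (Multiset.mem_filter.mp hz).2
      rw [this] at him
      simp at him
    refine ⟨Complex.normSq w, ?_, ?_⟩
    · exact Complex.normSq_pos.mpr hwne
    · rw [hTdec, Multiset.map_add, Multiset.prod_add, hcomm, ← hw, Complex.mul_conj]
  -- combine: f.eval (-1) is a negative real
  obtain ⟨n, hn, hTn⟩ := hTprod
  set a := ((A.map (fun z => (-1 - z.re : ℝ)))).prod with ha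
  set b := ((B.map (fun z => (-1 - z.re : ℝ)))).prod with hb
  have hevalval : f.eval (-1) = ((a * b * n : ℝ) : ℂ) := by
    rw [hprodsplit, hAre, hBre, hTn, multiset_coe_prod, multiset_coe_prod, ← ha, ← hb]
    push_cast
    ring
  have hre : (f.eval (-1)).re < 0 := by
    rw [hevalval, Complex.ofReal_re]
    have : a * b < 0 := mul_neg_of_neg_of_pos hAneg hBpos
    exact mul_neg_of_neg_of_pos this hn
  -- now a finite case analysis on the coefficients
  rw [heval (-1)] at hre
  rcases hcoeff 1 with h1 | h1 <;> rcases hcoeff 2 with h2 | h2 <;>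
    rcases hcoeff 3 with h3' | h3' <;> rcases hcoeff 4 with h4 | h4 <;>
    rcases hcoeff 5 with h5 | h5 <;>
    simp only [Finset.sum_range_succ, Finset.sum_range_zero, h0, h6, h1, h2, h3', h4, h5] at hre <;>
    norm_num [Complex.add_re, Complex.mul_re, Complex.zero_re, Complex.one_re] at hre
  -- surviving case: f = 1 + X + X^3 + X^5 + X^6
  obtain ⟨z, hz1, hz2⟩ := exists_circle_root
  apply hcirc z hz1
  rw [heval z]
  simp only [Finset.sum_range_succ, Finset.sum_range_zero, h0, h6, h1, h2, h3', h4, h5]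
  linear_combination hz2
end

section
/- For every positive integer m, the Littlewood polynomial h(z) with coefficient pattern ++−−−...− (1, 1 followed by 2m+1 coefficients −1), i.e. h(z) = (1 − 2z² + z^{3+2m})/(1 − z), has exactly 2 zeros in the open unit disk and no zeros on the unit circle. -/
open Polynomial

open Metric Set Complex

namespace Stmt18Aux


noncomputable def mob (p z : ℂ) : ℂ := (p - z) / (1 - (starRingEnd ℂ) p * z)

lemma normSq_mob_identity (p z : ℂ) :
    normSq (1 - (starRingEnd ℂ) p * z) - normSq (p - z)
      = (1 - normSq p) * (1 - normSq z) := by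
  simp [normSq_apply, Complex.sub_re, Complex.sub_im, Complex.mul_re, Complex.mul_im]
  ring

lemma mob_denom_ne {p z : ℂ} (h : ‖p‖ * ‖z‖ < 1) :
    1 - (starRingEnd ℂ) p * z ≠ 0 := by
  intro hc
  have h1 : (starRingEnd ℂ) p * z = 1 := by linear_combination -hc
  have := congrArg (‖·‖) h1
  simp [map_mul] at this
  rw [this] at h
  exact lt_irrefl _ h

lemma normSq_lt_one {p : ℂ} (hp : ‖p‖ < 1) : normSq p < 1 := by
  rw [← Complex.sq_norm]
  nlinarith [norm_nonneg p]

lemma abs_mul_lt_one {p z : ℂ} (hp : ‖p‖ < 1) (hz : ‖z‖ < 1) :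
    ‖p‖ * ‖z‖ < 1 := by
  nlinarith [norm_nonneg p, norm_nonneg z]

lemma mob_lt_one {p z : ℂ} (hp : ‖p‖ < 1) (hz : ‖z‖ < 1) :
    ‖mob p z‖ < 1 := by
  have hd := mob_denom_ne (abs_mul_lt_one hp hz)
  have hkey := normSq_mob_identity p z
  have h1 : normSq (p - z) < normSq (1 - (starRingEnd ℂ) p * z) := by
    nlinarith [normSq_lt_one hp, normSq_lt_one hz, normSq_nonneg (p - z)]
  rw [mob, norm_div]
  rw [div_lt_one (norm_pos_iff.2 hd)]
  have := Complex.sq_norm (p - z)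
  have := Complex.sq_norm (1 - (starRingEnd ℂ) p * z)
  nlinarith [norm_nonneg (p - z), norm_nonneg (1 - (starRingEnd ℂ) p * z)]

lemma mob_sq_le {p z : ℂ} (hp : ‖p‖ < 1) {ρ : ℝ} (hρ0 : 0 ≤ ρ) (hρ : ρ < 1)
    (hz : ‖z‖ ≤ ρ) :
    normSq (mob p z) ≤ 1 - (1 - normSq p) * (1 - ρ ^ 2) / 4 := by
  have hz1 : ‖z‖ < 1 := lt_of_le_of_lt hz hρ
  have hd := mob_denom_ne (abs_mul_lt_one hp hz1)
  have hkey := normSq_mob_identity p z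
  have hdpos : 0 < normSq (1 - (starRingEnd ℂ) p * z) := by
    rwa [normSq_pos]
  have hdle : normSq (1 - (starRingEnd ℂ) p * z) ≤ 4 := by
    have h4 : ‖1 - (starRingEnd ℂ) p * z‖ ≤ 2 := by
      calc ‖1 - (starRingEnd ℂ) p * z‖
          ≤ ‖(1:ℂ)‖ + ‖(starRingEnd ℂ) p * z‖ := by
            exact (norm_sub_le _ _)
        _ ≤ 2 := by
            simp [map_mul]
            nlinarith [norm_nonneg p, norm_nonneg z]
    rw [← Complex.sq_norm]
    nlinarith [norm_nonneg (1 - (starRingEnd ℂ) p * z)]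
  have hnsz : normSq z ≤ ρ ^ 2 := by
    rw [← Complex.sq_norm]
    nlinarith [norm_nonneg z]
  have hmv : normSq (mob p z) = normSq (p - z) / normSq (1 - (starRingEnd ℂ) p * z) := by
    rw [mob, normSq_div]
  rw [hmv]
  rw [div_le_iff₀ hdpos]
  have hnsp : normSq p < 1 := normSq_lt_one hp
  have e1 : 0 ≤ (1 - normSq p) * (ρ ^ 2 - normSq z) :=
    mul_nonneg (by linarith) (by linarith)
  have e2 : 0 ≤ (1 - normSq p) * (1 - ρ ^ 2) * (4 - normSq (1 - (starRingEnd ℂ) p * z)) :=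
    mul_nonneg (mul_nonneg (by linarith) (by nlinarith)) (by linarith)
  nlinarith [e1, e2]

lemma mob_invol {p z : ℂ} (hp : ‖p‖ < 1) (hz : ‖z‖ < 1) :
    mob p (mob p z) = z := by
  have hd := mob_denom_ne (abs_mul_lt_one hp hz)
  have hd2 := mob_denom_ne (abs_mul_lt_one hp (mob_lt_one hp hz))
  have hnsp : ((1 : ℂ) - (starRingEnd ℂ) p * p) ≠ 0 := by
    have : normSq p < 1 := normSq_lt_one hp
    intro hc
    have h1 : (starRingEnd ℂ) p * p = 1 := by linear_combination -hc
    rw [mul_comm, Complex.mul_conj] at h1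
    have := congrArg Complex.re h1
    simp at this
    linarith
  have hnsp' : ((1 : ℂ) - p * (starRingEnd ℂ) p) ≠ 0 := by
    rw [mul_comm] at hnsp; exact hnsp
  rw [mob, mob] at *
  rw [div_eq_iff hd2]
  have hd' : (1:ℂ) - z * (starRingEnd ℂ) p ≠ 0 := by rw [mul_comm]; exact hd
  field_simp
  ring



lemma mob_zero (p : ℂ) : mob p 0 = p := by simp [mob]
lemma mob_self (p : ℂ) : mob p p = 0 := by simp [mob]

lemma mob_hasDerivAt {p z : ℂ} (h : ‖p‖ * ‖z‖ < 1) :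
    HasDerivAt (mob p)
      (((starRingEnd ℂ) p * p - 1) / (1 - (starRingEnd ℂ) p * z) ^ 2) z := by
  have hd := mob_denom_ne h
  have hu : HasDerivAt (fun z : ℂ => p - z) (-1) z := (hasDerivAt_id z).const_sub p
  have hv : HasDerivAt (fun z : ℂ => 1 - (starRingEnd ℂ) p * z) (-((starRingEnd ℂ) p)) z := by
    simpa using (((hasDerivAt_id z).const_mul ((starRingEnd ℂ) p)).const_sub 1)
  have := hu.div hv hd
  exact (this : HasDerivAt (mob p) _ z).congr_deriv (by ring)

lemma one_sub_conj_mul_self_ne {p : ℂ} (hp : ‖p‖ < 1) :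
    (1 : ℂ) - (starRingEnd ℂ) p * p ≠ 0 := by
  intro hc
  have h1 : (starRingEnd ℂ) p * p = 1 := by linear_combination -hc
  rw [mul_comm, Complex.mul_conj] at h1
  have h2 := congrArg Complex.re h1
  have := normSq_lt_one hp
  simp at h2
  linarith

lemma schwarz_core {Φ : ℂ → ℂ} {ρ : ℝ} (hρ : ρ < 1)
    (hdiff : DifferentiableOn ℂ Φ (ball 0 1))
    (hmaps : MapsTo Φ (ball (0:ℂ) 1) (ball (0:ℂ) ρ))
    {p : ℂ} (hp : ‖p‖ < 1) (hfix : Φ p = p) :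
    (∀ q : ℂ, ‖q‖ < 1 → Φ q = q → q = p) ∧
    (∀ d : ℂ, HasDerivAt Φ d p → ‖d‖ < 1) := by
  have hb : ∀ w : ℂ, w ∈ ball (0:ℂ) 1 ↔ ‖w‖ < 1 := by
    intro w; rw [mem_ball_zero_iff]
  have hρ0 : 0 < ρ := by
    have h0 : (0:ℂ) ∈ ball (0:ℂ) 1 := by rw [hb]; norm_num
    have := hmaps h0
    rw [mem_ball_zero_iff] at this
    exact lt_of_le_of_lt (norm_nonneg _) this
  have habsΦ : ∀ w : ℂ, ‖w‖ < 1 → ‖Φ w‖ < ρ := by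
    intro w hw
    have := hmaps ((hb w).2 hw)
    rwa [mem_ball_zero_iff] at this
  set δ : ℝ := (1 - normSq p) * (1 - ρ ^ 2) / 4 with hδ
  have hnsp : normSq p < 1 := normSq_lt_one hp
  have hδpos : 0 < δ := by
    apply div_pos _ (by norm_num)
    exact mul_pos (by linarith) (by nlinarith)
  have hδle : δ ≤ 1 / 4 := by
    rw [hδ]
    have h1 : (1 - normSq p) ≤ 1 := by nlinarith [normSq_nonneg p]
    have h2 : (1 - ρ ^ 2) ≤ 1 := by nlinarith
    nlinarith
  set ρ'' : ℝ := Real.sqrt (1 - δ / 2) with hρ''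
  have hρ''sq : ρ'' ^ 2 = 1 - δ / 2 := Real.sq_sqrt (by linarith)
  have hρ''nn : 0 ≤ ρ'' := Real.sqrt_nonneg _
  have hρ''lt : ρ'' < 1 := by nlinarith
  set K : ℂ → ℂ := fun z => mob p (Φ (mob p z)) with hK
  have hK0 : K 0 = 0 := by rw [hK]; simp only; rw [mob_zero, hfix, mob_self]
  have hKmem : ∀ z ∈ ball (0:ℂ) 1, K z ∈ ball (0:ℂ) ρ'' := by
    intro z hz
    rw [hb] at hz
    have hw : ‖mob p z‖ < 1 := mob_lt_one hp hz
    have hΦw : ‖Φ (mob p z)‖ < ρ := habsΦ _ hw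
    have hle : normSq (K z) ≤ 1 - δ := mob_sq_le hp (le_of_lt hρ0) hρ (le_of_lt hΦw)
    rw [mem_ball_zero_iff]
    have := Complex.sq_norm (K z)
    nlinarith [norm_nonneg (K z)]
  have hKdiff : DifferentiableOn ℂ K (ball 0 1) := by
    intro z hz
    apply DifferentiableAt.differentiableWithinAt
    rw [hb] at hz
    have hw : ‖mob p z‖ < 1 := mob_lt_one hp hz
    have hΦw : ‖Φ (mob p z)‖ < 1 := lt_trans (habsΦ _ hw) hρ
    have d1 : DifferentiableAt ℂ (mob p) z := (mob_hasDerivAt (abs_mul_lt_one hp hz)).differentiableAt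
    have d2 : DifferentiableAt ℂ Φ (mob p z) :=
      hdiff.differentiableAt (isOpen_ball.mem_nhds ((hb _).2 hw))
    have d3 : DifferentiableAt ℂ (mob p) (Φ (mob p z)) :=
      (mob_hasDerivAt (abs_mul_lt_one hp hΦw)).differentiableAt
    exact (d3.comp z (d2.comp z d1) : DifferentiableAt ℂ (mob p ∘ Φ ∘ mob p) z)
  have hds : ∀ z ∈ ball (0:ℂ) 1, ‖dslope K 0 z‖ ≤ ρ'' / 1 := by
    intro z hz
    apply Complex.norm_dslope_le_div_of_mapsTo_ball hKdiff _ hz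
    rw [hK0]
    exact fun z hz => ball_subset_closedBall (hKmem z hz)
  constructor
  · intro q hq hfixq
    by_contra hne
    set w := mob p q with hw
    have hw1 : ‖w‖ < 1 := mob_lt_one hp hq
    have hwne : w ≠ 0 := by
      intro h0
      apply hne
      have := mob_invol hp hq
      rw [← hw, h0, mob_zero] at this
      exact this.symm
    have hKw : K w = w := by
      show mob p (Φ (mob p (mob p q))) = mob p q
      rw [mob_invol hp hq, hfixq]
    have := hds w ((hb w).2 hw1)
    rw [dslope_of_ne K hwne, slope_def_field, hK0, hKw] at this
    simp [div_self hwne] at this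
    linarith
  · intro d hd
    have hne := one_sub_conj_mul_self_ne hp
    have h1 : HasDerivAt (mob p) ((starRingEnd ℂ) p * p - 1) 0 := by
      have h0 : ‖p‖ * ‖(0:ℂ)‖ < 1 := by simp
      simpa using mob_hasDerivAt h0
    have hdp : HasDerivAt Φ d (mob p 0) := by rwa [mob_zero]
    have h3 : HasDerivAt (mob p)
        (((starRingEnd ℂ) p * p - 1) / (1 - (starRingEnd ℂ) p * p) ^ 2) (Φ (mob p 0)) := by
      rw [mob_zero, hfix]
      exact mob_hasDerivAt (abs_mul_lt_one hp hp)
    have hcomp : HasDerivAt K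
        ((((starRingEnd ℂ) p * p - 1) / (1 - (starRingEnd ℂ) p * p) ^ 2)
          * (d * ((starRingEnd ℂ) p * p - 1))) 0 := by
      exact h3.comp 0 (hdp.comp 0 h1)
    have hval : (((starRingEnd ℂ) p * p - 1) / (1 - (starRingEnd ℂ) p * p) ^ 2)
          * (d * ((starRingEnd ℂ) p * p - 1)) = d := by
      field_simp
      ring
    rw [hval] at hcomp
    have := hds 0 (by rw [hb]; norm_num)
    rw [dslope_same, hcomp.deriv] at this
    linarith



noncomputable def Fm (n : ℕ) (z : ℂ) : ℂ := Complex.exp (Complex.log ((1 + z ^ n) / 2) / 2)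

/-- analytic square root helper -/
lemma u_re_pos {n : ℕ} (hn : 1 ≤ n) {z : ℂ} (hz : ‖z‖ < 1) :
    0 < (((1 + z ^ n) / 2 : ℂ)).re := by
  have h1 : ((1 + z ^ n) / 2 : ℂ) = ((1 / 2 : ℝ) : ℂ) * (1 + z ^ n) := by
    push_cast; ring
  rw [h1, Complex.re_ofReal_mul, Complex.add_re, Complex.one_re]
  have h2 : |(z ^ n).re| ≤ ‖z ^ n‖ := Complex.abs_re_le_norm _
  have h3 : ‖z ^ n‖ < 1 := by
    rw [norm_pow]
    exact pow_lt_one₀ (norm_nonneg z) hz (by omega)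
  have := abs_le.1 h2
  nlinarith [this.1]

lemma u_ne_zero {n : ℕ} (hn : 1 ≤ n) {z : ℂ} (hz : ‖z‖ < 1) :
    ((1 + z ^ n) / 2 : ℂ) ≠ 0 := by
  intro hc
  have := u_re_pos hn hz
  rw [hc] at this
  simp at this

lemma Fm_sq {n : ℕ} (hn : 1 ≤ n) {z : ℂ} (hz : ‖z‖ < 1) :
    Fm n z ^ 2 = (1 + z ^ n) / 2 := by
  rw [Fm, sq, ← Complex.exp_add]
  rw [show Complex.log ((1 + z ^ n) / 2) / 2 + Complex.log ((1 + z ^ n) / 2) / 2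
      = Complex.log ((1 + z ^ n) / 2) by ring]
  exact Complex.exp_log (u_ne_zero hn hz)

lemma Fm_hasDerivAt {n : ℕ} (hn : 1 ≤ n) {z : ℂ} (hz : ‖z‖ < 1) :
    HasDerivAt (Fm n)
      (Fm n z * (((n : ℂ) * z ^ (n - 1) / 2) / ((1 + z ^ n) / 2) / 2)) z := by
  have hu : HasDerivAt (fun z : ℂ => (1 + z ^ n) / 2) ((n : ℂ) * z ^ (n - 1) / 2) z :=
    ((hasDerivAt_pow n z).const_add 1).div_const 2
  have hslit : ((1 + z ^ n) / 2 : ℂ) ∈ Complex.slitPlane :=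
    Complex.mem_slitPlane_iff.2 (Or.inl (u_re_pos hn hz))
  have hlog := (hu.clog hslit).div_const 2
  exact hlog.cexp

lemma Fm_abs_lt {n : ℕ} (hn : 5 ≤ n) {z : ℂ} (hz : ‖z‖ < 93 / 100) :
    ‖Fm n z‖ < 921 / 1000 := by
  have hz1 : ‖z‖ < 1 := lt_trans hz (by norm_num)
  have habs2 : (‖Fm n z‖) ^ 2 = ‖(1 + z ^ n) / 2‖ := by
    rw [← norm_pow, Fm_sq (by omega) hz1]
  have ht0 : 0 ≤ ‖z‖ := norm_nonneg z
  have hub : ‖(1 + z ^ n) / 2‖ ≤ (1 + (‖z‖) ^ 5) / 2 := by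
    rw [norm_div, Complex.norm_two]
    have h1 : ‖1 + z ^ n‖ ≤ 1 + (‖z‖) ^ n := by
      calc ‖1 + z ^ n‖ ≤ ‖1‖ + ‖z ^ n‖ :=
            norm_add_le _ _
        _ = 1 + (‖z‖) ^ n := by rw [norm_one, norm_pow]
    have h2 : (‖z‖) ^ n ≤ (‖z‖) ^ 5 :=
      pow_le_pow_of_le_one ht0 (le_of_lt hz1) hn
    linarith
  have h5 : (‖z‖) ^ 5 < (93 / 100 : ℝ) ^ 5 := by
    exact pow_lt_pow_left₀ hz ht0 (by norm_num)
  nlinarith [norm_nonneg (Fm n z)]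

lemma root_small {n : ℕ} (hn : 5 ≤ n) {z : ℂ} (hz : ‖z‖ < 1)
    (heq : 1 - 2 * z ^ 2 + z ^ n = 0) : ‖z‖ < 93 / 100 := by
  set t := ‖z‖ with ht
  have ht0 : 0 ≤ t := norm_nonneg z
  have h1 : (2 : ℂ) * z ^ 2 = 1 + z ^ n := by linear_combination -heq
  have h2 : 2 * t ^ 2 = ‖1 + z ^ n‖ := by
    rw [← h1, norm_mul, norm_pow, Complex.norm_two]
  have h3 : 2 * t ^ 2 ≤ 1 + t ^ 5 := by
    rw [h2] at *
    calc ‖1 + z ^ n‖ ≤ 1 + t ^ n := by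
          calc ‖1 + z ^ n‖ ≤ ‖1‖ + ‖z ^ n‖ :=
                norm_add_le _ _
            _ = 1 + t ^ n := by rw [norm_one, norm_pow]
      _ ≤ 1 + t ^ 5 := by linarith [pow_le_pow_of_le_one ht0 (le_of_lt hz) hn]
  by_contra hge
  push_neg at hge
  have e2 : (93 / 100) * t ≤ t ^ 2 := by nlinarith
  have e3 : (93 / 100) * t ^ 2 ≤ t ^ 3 := by nlinarith
  have e4 : (93 / 100) * t ^ 3 ≤ t ^ 4 := by nlinarith
  have hq : 1 + t - t ^ 2 - t ^ 3 - t ^ 4 < 0 := by nlinarith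
  have hid : (1 - t) * (1 + t - t ^ 2 - t ^ 3 - t ^ 4) = 1 - 2 * t ^ 2 + t ^ 5 := by ring
  have hneg : 1 - 2 * t ^ 2 + t ^ 5 < 0 := by
    rw [← hid]
    exact mul_neg_of_pos_of_neg (by linarith) hq
  linarith



lemma abs_rc : ‖((93/100 : ℂ))‖ = 93/100 := by
  rw [show (93/100 : ℂ) = ((93/100 : ℝ) : ℂ) by norm_num, Complex.norm_real]
  norm_num

lemma abs_cc : ‖((100/93 : ℂ))‖ = 100/93 := by
  rw [show (100/93 : ℂ) = ((100/93 : ℝ) : ℂ) by norm_num, Complex.norm_real]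
  norm_num

lemma upper_bound {n : ℕ} (hn : 5 ≤ n) :
    (((1 : ℂ[X]) - C 2 * X ^ 2 + X ^ n).roots.filter
      (fun z => ‖z‖ < 1)).card ≤ 2 := by
  have hn1 : 1 ≤ n := by omega
  set G : ℂ[X] := 1 - C 2 * X ^ 2 + X ^ n with hGdef
  have hGeval : ∀ z : ℂ, G.eval z = 1 - 2 * z ^ 2 + z ^ n := by intro z; simp [hGdef]
  have hG0 : G ≠ 0 := by
    intro h0
    have := hGeval 0
    rw [h0] at this
    simp [zero_pow (by omega : n ≠ 0)] at this
  set S := G.roots.filter (fun z => ‖z‖ < 1) with hS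
  have hroot : ∀ z ∈ S, (1 - 2 * z ^ 2 + z ^ n = 0) ∧ ‖z‖ < 1 := by
    intro z hz
    obtain ⟨h1, h2⟩ := Multiset.mem_filter.1 hz
    refine ⟨?_, h2⟩
    have := (mem_roots hG0).1 h1
    rwa [IsRoot, hGeval] at this
  have hsign : ∀ z ∈ S, Fm n z = z ∨ Fm n z = -z := by
    intro z hz
    obtain ⟨heq, hz1⟩ := hroot z hz
    have h2 : Fm n z ^ 2 = z ^ 2 := by
      rw [Fm_sq hn1 hz1]
      linear_combination (1/2 : ℂ) * heq
    have h3 : (Fm n z - z) * (Fm n z + z) = 0 := by linear_combination h2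
    rcases mul_eq_zero.1 h3 with h | h
    · exact Or.inl (sub_eq_zero.1 h)
    · exact Or.inr (eq_neg_of_add_eq_zero_left h)
  by_contra hgt
  push_neg at hgt
  have hgt3 : 3 ≤ Multiset.card S := hgt
  -- The core Schwarz argument applied to Φ_s
  have core : ∀ s : ℂ, s * s = 1 → ‖s‖ = 1 → ∀ p, p ∈ S → Fm n p = s * p →
      ((∀ q, q ∈ S → Fm n q = s * q → q = p) ∧ S.count p ≤ 1) := by
    intro s hss hsa p hpS hps
    obtain ⟨hpeq, hp1⟩ := hroot p hpS
    have hpr : ‖p‖ < 93 / 100 := root_small hn hp1 hpeq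
    set Φ : ℂ → ℂ := fun w => s * Fm n ((93/100 : ℂ) * w) * (100/93 : ℂ) with hΦ
    have hrc : (93/100 : ℂ) * (100/93 : ℂ) = 1 := by norm_num
    have hdiff : DifferentiableOn ℂ Φ (ball 0 1) := by
      intro z hz
      rw [mem_ball_zero_iff] at hz
      have hrz : ‖((93/100 : ℂ) * z)‖ < 1 := by
        rw [norm_mul, abs_rc]
        nlinarith [norm_nonneg z]
      have d0 : DifferentiableAt ℂ (fun w : ℂ => (93/100 : ℂ) * w) z :=
        (differentiableAt_id.const_mul _)
      have d1 : DifferentiableAt ℂ (Fm n) ((93/100 : ℂ) * z) :=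
        (Fm_hasDerivAt hn1 hrz).differentiableAt
      exact (((d1.comp z d0).const_mul s).mul_const _).differentiableWithinAt
    have hmaps : MapsTo Φ (ball (0:ℂ) 1) (ball (0:ℂ) (921/930 : ℝ)) := by
      intro z hz
      rw [mem_ball_zero_iff] at hz
      have hrz : ‖((93/100 : ℂ) * z)‖ < 93/100 := by
        rw [norm_mul, abs_rc]
        nlinarith [norm_nonneg z]
      have := Fm_abs_lt hn hrz
      rw [mem_ball_zero_iff, hΦ]
      simp only [norm_mul, hsa, one_mul, abs_cc]
      nlinarith
    have hc0 : (100/93 : ℂ) ≠ 0 := by norm_num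
    have hfixp : Φ (p * (100/93 : ℂ)) = p * (100/93 : ℂ) := by
      rw [hΦ]
      simp only
      rw [show (93/100 : ℂ) * (p * (100/93 : ℂ)) = p by field_simp, hps]
      ring_nf
      linear_combination p * (100/93 : ℂ) * hss
    have habsp : ‖(p * (100/93 : ℂ))‖ < 1 := by
      rw [norm_mul, abs_cc]
      nlinarith [norm_nonneg p]
    have SC := schwarz_core (by norm_num : (921/930 : ℝ) < 1) hdiff hmaps habsp hfixp
    constructor
    · intro q hqS hqs
      obtain ⟨hqeq, hq1⟩ := hroot q hqS
      have hqr : ‖q‖ < 93 / 100 := root_small hn hq1 hqeq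
      have hfixq : Φ (q * (100/93 : ℂ)) = q * (100/93 : ℂ) := by
        rw [hΦ]
        simp only
        rw [show (93/100 : ℂ) * (q * (100/93 : ℂ)) = q by field_simp, hqs]
        ring_nf
        linear_combination q * (100/93 : ℂ) * hss
      have habsq : ‖(q * (100/93 : ℂ))‖ < 1 := by
        rw [norm_mul, abs_cc]
        nlinarith [norm_nonneg q]
      have := SC.1 _ habsq hfixq
      exact mul_right_cancel₀ hc0 this
    · by_contra hcount
      push_neg at hcount
      have hmul2 : 2 ≤ rootMultiplicity p G := by
        rw [← Polynomial.count_roots]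
        calc 2 ≤ S.count p := hcount
          _ ≤ G.roots.count p := Multiset.count_le_of_le p (Multiset.filter_le _ _)
      have hdvd : (X - C p) ^ 2 ∣ G :=
        (pow_dvd_pow _ hmul2).trans (Polynomial.pow_rootMultiplicity_dvd G p)
      obtain ⟨k, hk⟩ := hdvd
      have hder0 : eval p (derivative G) = 0 := by
        rw [hk]
        simp [derivative_mul, derivative_pow, eval_mul, eval_add, eval_pow, eval_sub]
      have hder1 : (n : ℂ) * p ^ (n - 1) = 4 * p := by
        have he : eval p (derivative G) = -(4 * p) + (n : ℂ) * p ^ (n - 1) := by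
          rw [hGdef]
          simp [derivative_X_pow]
          ring
        rw [hder0] at he
        linear_combination -he
      have hp0 : p ≠ 0 := by
        intro h0
        rw [h0] at hpeq
        simp [zero_pow (by omega : n ≠ 0)] at hpeq
      -- derivative of Φ at the fixed point equals 1
      have hd0 : HasDerivAt (fun w : ℂ => (93/100 : ℂ) * w) (93/100 : ℂ) (p * (100/93 : ℂ)) := by
        simpa using (hasDerivAt_id (p * (100/93 : ℂ))).const_mul (93/100 : ℂ)
      have hrpc : (93/100 : ℂ) * (p * (100/93 : ℂ)) = p := by field_simp
      have hd1 : HasDerivAt (Fm n)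
          (Fm n p * (((n : ℂ) * p ^ (n - 1) / 2) / ((1 + p ^ n) / 2) / 2))
          ((93/100 : ℂ) * (p * (100/93 : ℂ))) := by
        rw [hrpc]
        exact Fm_hasDerivAt hn1 hp1
      have hcomp : HasDerivAt Φ
          (s * ((Fm n p * (((n : ℂ) * p ^ (n - 1) / 2) / ((1 + p ^ n) / 2) / 2)) * (93/100 : ℂ)) * (100/93 : ℂ))
          (p * (100/93 : ℂ)) := by
        exact ((hd1.comp _ hd0).const_mul s).mul_const _
      have hval : s * ((Fm n p * (((n : ℂ) * p ^ (n - 1) / 2) / ((1 + p ^ n) / 2) / 2)) * (93/100 : ℂ)) * (100/93 : ℂ) = 1 := by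
        rw [hps, hder1, show (1 : ℂ) + p ^ n = 2 * p ^ 2 by linear_combination hpeq]
        field_simp
        ring_nf
        rw [sq, hss, one_mul]
      rw [hval] at hcomp
      have := SC.2 1 hcomp
      simp at this
  -- now use `core` to bound the multiset
  by_cases hdup : ∃ z ∈ S, 2 ≤ S.count z
  · obtain ⟨z, hzS, hzc⟩ := hdup
    rcases hsign z hzS with h | h
    · have := (core 1 (by norm_num) (by simp) z hzS (by rw [one_mul]; exact h)).2
      omega
    · have := (core (-1) (by norm_num) (by simp) z hzS (by rw [neg_one_mul]; exact h)).2
      omega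
  · push_neg at hdup
    have hnd : S.Nodup := by
      rw [Multiset.nodup_iff_count_le_one]
      intro a
      by_cases ha : a ∈ S
      · have := hdup a ha; omega
      · rw [Multiset.count_eq_zero_of_notMem ha]; omega
    have hcard : S.toFinset.card = Multiset.card S :=
      Multiset.toFinset_card_eq_card_iff_nodup.2 hnd
    set T := S.toFinset with hT
    have h3 : 3 ≤ T.card := by omega
    obtain ⟨a, ha⟩ := Finset.card_pos.1 (by omega : 0 < T.card)
    have h2' : 0 < (T.erase a).card := by
      rw [Finset.card_erase_of_mem ha]; omega
    obtain ⟨b, hb⟩ := Finset.card_pos.1 h2'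
    obtain ⟨hba, hbT⟩ := Finset.mem_erase.1 hb
    have h1' : 0 < ((T.erase a).erase b).card := by
      rw [Finset.card_erase_of_mem hb, Finset.card_erase_of_mem ha]; omega
    obtain ⟨c, hc⟩ := Finset.card_pos.1 h1'
    obtain ⟨hcb, hc2⟩ := Finset.mem_erase.1 hc
    obtain ⟨hca, hcT⟩ := Finset.mem_erase.1 hc2
    have haS : a ∈ S := Multiset.mem_toFinset.1 ha
    have hbS : b ∈ S := Multiset.mem_toFinset.1 hbT
    have hcS : c ∈ S := Multiset.mem_toFinset.1 hcT
    have pair : ∃ s : ℂ, (s * s = 1 ∧ ‖s‖ = 1) ∧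
        ∃ x y : ℂ, x ∈ S ∧ y ∈ S ∧ x ≠ y ∧ Fm n x = s * x ∧ Fm n y = s * y := by
      have h1s : ((1:ℂ) * (1:ℂ) = 1 ∧ ‖(1:ℂ)‖ = 1) := by constructor <;> simp
      have hns : ((-1:ℂ) * (-1:ℂ) = 1 ∧ ‖(-1:ℂ)‖ = 1) := by constructor <;> simp
      rcases hsign a haS with hA | hA <;> rcases hsign b hbS with hB | hB <;>
        rcases hsign c hcS with hC | hC
      · exact ⟨1, h1s, a, b, haS, hbS, fun h => hba (h.symm), by simpa using hA, by simpa using hB⟩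
      · exact ⟨1, h1s, a, b, haS, hbS, fun h => hba (h.symm), by simpa using hA, by simpa using hB⟩
      · exact ⟨1, h1s, a, c, haS, hcS, fun h => hca (h.symm), by simpa using hA, by simpa using hC⟩
      · exact ⟨-1, hns, b, c, hbS, hcS, fun h => hcb (h.symm), by simpa [neg_one_mul] using hB, by simpa [neg_one_mul] using hC⟩
      · exact ⟨1, h1s, b, c, hbS, hcS, fun h => hcb (h.symm), by simpa using hB, by simpa using hC⟩
      · exact ⟨-1, hns, a, c, haS, hcS, fun h => hca (h.symm), by simpa [neg_one_mul] using hA, by simpa [neg_one_mul] using hC⟩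
      · exact ⟨-1, hns, a, b, haS, hbS, fun h => hba (h.symm), by simpa [neg_one_mul] using hA, by simpa [neg_one_mul] using hB⟩
      · exact ⟨-1, hns, a, b, haS, hbS, fun h => hba (h.symm), by simpa [neg_one_mul] using hA, by simpa [neg_one_mul] using hB⟩
    obtain ⟨s, ⟨hss, hsa⟩, x, y, hxS, hyS, hxy, hxF, hyF⟩ := pair
    exact hxy (((core s hss hsa x hxS hxF).1 y hyS hyF).symm)


lemma lower_bound {n : ℕ} (hn : 5 ≤ n) (hodd : Odd n) :
    2 ≤ (((1 : ℂ[X]) - C 2 * X ^ 2 + X ^ n).roots.filter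
      (fun z => ‖z‖ < 1)).card := by
  set G : ℂ[X] := 1 - C 2 * X ^ 2 + X ^ n with hGdef
  have hGeval : ∀ z : ℂ, G.eval z = 1 - 2 * z ^ 2 + z ^ n := by intro z; simp [hGdef]
  have hG0 : G ≠ 0 := by
    intro h0
    have := hGeval 0
    rw [h0] at this
    simp [zero_pow (by omega : n ≠ 0)] at this
  set f : ℝ → ℝ := fun x => 1 - 2 * x ^ 2 + x ^ n with hf
  have hfc : Continuous f :=
    (continuous_const.sub (continuous_const.mul (continuous_pow 2))).add (continuous_pow n)
  have hf0 : f 0 = 1 := by simp [hf, zero_pow (by omega : n ≠ 0)]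
  have hfm1 : f (-1) = -2 := by simp [hf, hodd.neg_one_pow]; norm_num
  have hf9 : f (9/10) < 0 := by
    have h5 : ((9:ℝ)/10) ^ n ≤ ((9:ℝ)/10) ^ 5 :=
      pow_le_pow_of_le_one (by norm_num) (by norm_num) hn
    simp only [hf]
    nlinarith
  obtain ⟨x, hx, hfx⟩ := intermediate_value_Ioo (by norm_num : (-1:ℝ) ≤ 0)
    hfc.continuousOn (by rw [hf0, hfm1]; norm_num : (0:ℝ) ∈ Ioo (f (-1)) (f 0))
  obtain ⟨y, hy, hfy⟩ := intermediate_value_Ioo' (by norm_num : (0:ℝ) ≤ 9/10)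
    hfc.continuousOn (by rw [hf0]; exact ⟨hf9, by norm_num⟩ : (0:ℝ) ∈ Ioo (f (9/10)) (f 0))
  have hmem : ∀ t : ℝ, f t = 0 → |t| < 1 → (t : ℂ) ∈ G.roots.filter (fun z => ‖z‖ < 1) := by
    intro t hft hlt
    rw [Multiset.mem_filter]
    constructor
    · rw [mem_roots hG0, IsRoot, hGeval]
      have : ((1:ℂ) - 2 * (t:ℂ) ^ 2 + (t:ℂ) ^ n) = ((1 - 2 * t ^ 2 + t ^ n : ℝ) : ℂ) := by
        push_cast; ring
      rw [this]
      rw [show (1 - 2 * t ^ 2 + t ^ n : ℝ) = f t from rfl, hft]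
      norm_num
    · simpa [Complex.norm_real] using hlt
  have hxS := hmem x hfx (abs_lt.2 ⟨by linarith [hx.1], by linarith [hx.2]⟩)
  have hyS := hmem y hfy (abs_lt.2 ⟨by linarith [hy.1], by linarith [hy.2]⟩)
  have hne : (y : ℂ) ≠ (x : ℂ) := by
    intro hc
    have := Complex.ofReal_inj.1 hc
    have := hx.2; have := hy.1
    linarith
  set S := G.roots.filter (fun z => ‖z‖ < 1) with hS
  have hyS' : (y : ℂ) ∈ S.erase (x : ℂ) := (Multiset.mem_erase_of_ne hne).2 hyS
  have c1 : 0 < Multiset.card (S.erase (x:ℂ)) :=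
    Multiset.card_pos_iff_exists_mem.2 ⟨_, hyS'⟩
  have c2 : Multiset.card (S.erase (x:ℂ)) = Multiset.card S - 1 :=
    Multiset.card_erase_of_mem hxS
  have c3 : 0 < Multiset.card S := Multiset.card_pos_iff_exists_mem.2 ⟨_, hxS⟩
  omega

end Stmt18Aux

open Stmt18Aux in


theorem stmt_18 (m : ℕ) (hm : 1 ≤ m) (h : Polynomial ℂ)
    (hdef : (1 - X) * h = 1 - C 2 * X ^ 2 + X ^ (3 + 2 * m)) :
    diskZeros h = 2 ∧ ∀ z : ℂ, ‖z‖ = 1 → h.eval z ≠ 0 := by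
  have hn5 : 5 ≤ 3 + 2 * m := by omega
  have hodd : Odd (3 + 2 * m) := ⟨1 + m, by ring⟩
  set n := 3 + 2 * m with hn
  set G : ℂ[X] := 1 - C 2 * X ^ 2 + X ^ n with hGdef
  have hGeval : ∀ z : ℂ, G.eval z = 1 - 2 * z ^ 2 + z ^ n := by intro z; simp [hGdef]
  have hG0 : G ≠ 0 := by
    intro h0
    have := hGeval 0
    rw [h0] at this
    simp [zero_pow (by omega : n ≠ 0)] at this
  have hmul : (1 - X) * h = G := hdef
  have hh0 : h ≠ 0 := by
    intro h0
    rw [h0, mul_zero] at hmul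
    exact hG0 hmul.symm
  have h1ne : h.eval 1 ≠ 0 := by
    intro hev
    have hD := congrArg (fun q => Polynomial.eval 1 (derivative q)) hmul
    simp only [derivative_mul, derivative_sub, derivative_one, derivative_X, hGdef,
      derivative_add, derivative_X_pow, derivative_C_mul, eval_add, eval_mul, eval_sub,
      eval_one, eval_X, eval_pow, eval_neg, eval_natCast, eval_C, zero_sub, one_pow,
      mul_one, sub_self, zero_mul, add_zero, neg_mul, one_mul, eval_zero, eval_mul,
      eval_natCast, Polynomial.eval_ofNat] at hD
    rw [hev] at hD
    simp at hD
    have : ((n : ℂ)) = 4 := by linear_combination -hD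
    have : (n : ℕ) = 4 := by exact_mod_cast this
    omega
  have hroots : G.roots = 1 ::ₘ h.roots := by
    rw [← hmul, roots_mul (by rw [hmul]; exact hG0)]
    have h1X : (1 - X : ℂ[X]) = C (-1) * (X - C 1) := by
      rw [map_neg, map_one]; ring
    rw [h1X, roots_C_mul _ (by norm_num : (-1 : ℂ) ≠ 0), roots_X_sub_C,
      Multiset.singleton_add]
  constructor
  · have hfilter : (h.roots.filter (fun z => ‖z‖ < 1))
        = G.roots.filter (fun z => ‖z‖ < 1) := by
      rw [hroots, Multiset.filter_cons_of_neg]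
      simp
    rw [diskZeros, hfilter]
    exact le_antisymm (upper_bound hn5) (lower_bound hn5 hodd)
  · intro z hz hev
    have hGz : G.eval z = 0 := by
      rw [← hmul, eval_mul, hev, mul_zero]
    rw [hGeval] at hGz
    have h2z : (2 : ℂ) * z ^ 2 = 1 + z ^ n := by linear_combination -hGz
    have habs : ‖1 + z ^ n‖ = 2 := by
      rw [← h2z, norm_mul, norm_pow, Complex.norm_two, hz]
      norm_num
    have hzn : ‖z ^ n‖ = 1 := by rw [norm_pow, hz, one_pow]
    have hw : z ^ n = 1 := by
      have h1 : normSq (1 + z ^ n) = 4 := by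
        have := Complex.sq_norm (1 + z ^ n)
        rw [habs] at this
        nlinarith
      have h2 : normSq (z ^ n) = 1 := by
        have := Complex.sq_norm (z ^ n)
        rw [hzn] at this
        nlinarith
      have h3 : (z ^ n).re = 1 := by
        rw [normSq_apply] at h1 h2
        simp [Complex.add_re, Complex.add_im] at h1
        nlinarith [h1, h2]
      have h4 : (z ^ n).im = 0 := by
        rw [normSq_apply] at h2
        nlinarith
      exact Complex.ext h3 h4
    have hz2 : z ^ 2 = 1 := by
      rw [hw] at h2z
      linear_combination (1/2 : ℂ) * h2z
    have : (z - 1) * (z + 1) = 0 := by linear_combination hz2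
    rcases mul_eq_zero.1 this with h1 | h1
    · have hz1 : z = 1 := by linear_combination h1
      rw [hz1] at hev
      exact h1ne hev
    · have hz1 : z = -1 := by linear_combination h1
      rw [hz1, hodd.neg_one_pow] at hw
      norm_num at hw
end
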